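/- arXiv:1406.3441 — 2 statements merged into one kernel-verified Lean document; each statement's English description precedes it below -/
import Mathlib

section
/- Let ε > 0 and let N be a sufficiently large integer. Then Σ Λ(n₁) Λ(n₂) e^{−2(n₁² + n₂²)/N} Λ(n₃) Λ(n₄) ≪_ε N^{3/4 + ε}, where the sum runs over quadruples of integers n₁, n₂, n₃, n₄ ≥ 2 with n₁² + n₂² = n₃² + n₄² and n₁ a proper prime power (n₁ = p^j with p prime and j ≥ 2). -/
open scoped Classical

/-- The summand `Λ(n₁) Λ(n₂) e^{-2(n₁²+n₂²)/N} Λ(n₃) Λ(n₄)` over quadruples of integers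
`n₁, n₂, n₃, n₄ ≥ 2` with `n₁² + n₂² = n₃² + n₄²` and `n₁` a proper prime power, and `0`
otherwise. -/
noncomputable def properPowerTerm (N : ℕ) (q : ℕ × ℕ × ℕ × ℕ) : ℝ :=
  if 2 ≤ q.1 ∧ 2 ≤ q.2.1 ∧ 2 ≤ q.2.2.1 ∧ 2 ≤ q.2.2.2 ∧
      q.1 ^ 2 + q.2.1 ^ 2 = q.2.2.1 ^ 2 + q.2.2.2 ^ 2 ∧
      (∃ p j : ℕ, p.Prime ∧ 2 ≤ j ∧ q.1 = p ^ j) then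
    ArithmeticFunction.vonMangoldt q.1 * ArithmeticFunction.vonMangoldt q.2.1 *
      Real.exp (-2 * ((q.1 : ℝ) ^ 2 + (q.2.1 : ℝ) ^ 2) / N) *
      ArithmeticFunction.vonMangoldt q.2.2.1 * ArithmeticFunction.vonMangoldt q.2.2.2
  else 0

open Real Finset

-- x^s ≤ 1 + x for 0 ≤ s ≤ 1
lemma rpow_le_one_add {x s : ℝ} (hx : 0 ≤ x) (hs0 : 0 ≤ s) (hs1 : s ≤ 1) :
    x ^ s ≤ 1 + x := by
  rcases le_or_gt x 1 with h | h
  · calc x ^ s ≤ 1 := Real.rpow_le_one hx h hs0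
    _ ≤ 1 + x := by linarith
  · calc x ^ s ≤ x ^ (1:ℝ) := Real.rpow_le_rpow_of_exponent_le h.le hs1
    _ = x := Real.rpow_one x
    _ ≤ 1 + x := by linarith

-- e^{-x} ≤ x^{-s} for x > 0, 0 < s ≤ 1
lemma exp_neg_le_rpow_neg {x s : ℝ} (hx : 0 < x) (hs0 : 0 ≤ s) (hs1 : s ≤ 1) :
    Real.exp (-x) ≤ x ^ (-s) := by
  rw [Real.rpow_neg hx.le, Real.exp_neg]
  apply inv_anti₀ (Real.rpow_pos_of_pos hx _)
  calc x ^ s ≤ 1 + x := rpow_le_one_add hx.le hs0 hs1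
  _ ≤ Real.exp x := by have := Real.add_one_le_exp x; linarith

-- m^s * e^{-m/N} ≤ N^s
lemma rpow_mul_exp_le {m N s : ℝ} (hm : 0 ≤ m) (hN : 0 < N) (hs0 : 0 ≤ s) (hs1 : s ≤ 1) :
    m ^ s * Real.exp (-(m / N)) ≤ N ^ s := by
  have h1 : m ^ s = N ^ s * (m / N) ^ s := by
    rw [← Real.mul_rpow (le_of_lt hN) (by positivity)]
    rw [mul_div_cancel₀ _ (ne_of_gt hN)]
  rw [h1]
  have h2 : (m / N) ^ s ≤ Real.exp (m / N) := by
    calc (m/N) ^ s ≤ 1 + m/N := rpow_le_one_add (by positivity) hs0 hs1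
    _ ≤ Real.exp (m/N) := by have := Real.add_one_le_exp (m/N); linarith
  calc N ^ s * (m/N) ^ s * Real.exp (-(m/N)) ≤ N ^ s * Real.exp (m/N) * Real.exp (-(m/N)) := by
        apply mul_le_mul_of_nonneg_right _ (Real.exp_nonneg _)
        exact mul_le_mul_of_nonneg_left h2 (Real.rpow_nonneg hN.le s)
  _ = N ^ s := by rw [mul_assoc, ← Real.exp_add]; simp

-- s^δ e^{-s/(2N)} ≤ 2 (2N)^δ e^{-s/(4N)}
lemma rpow_mul_exp_half {s N δ : ℝ} (hs : 0 ≤ s) (hN : 0 < N) (hδ0 : 0 ≤ δ) (hδ1 : δ ≤ 1) :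
    s ^ δ * Real.exp (-(s / (2*N))) ≤ 2 * (2*N) ^ δ * Real.exp (-(s / (4*N))) := by
  have h2N : (0:ℝ) < 2*N := by linarith
  have h1 : s ^ δ = (2*N) ^ δ * (s / (2*N)) ^ δ := by
    rw [← Real.mul_rpow h2N.le (by positivity), mul_div_cancel₀ _ (ne_of_gt h2N)]
  have h2 : (s / (2*N)) ^ δ ≤ 2 * Real.exp (s / (4*N)) := by
    calc (s/(2*N)) ^ δ ≤ 1 + s/(2*N) := rpow_le_one_add (by positivity) hδ0 hδ1
    _ ≤ 2 * (1 + s/(4*N)) := by rw [mul_add]; have : s/(2*N) = 2*(s/(4*N)) := by ring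
                                rw [this]; have : 0 ≤ s/(4*N) := by positivity
                                linarith
    _ ≤ 2 * Real.exp (s/(4*N)) := by
        have := Real.add_one_le_exp (s/(4*N)); nlinarith [Real.exp_pos (s/(4*N))]
  rw [h1]
  calc (2*N)^δ * (s/(2*N))^δ * Real.exp (-(s/(2*N)))
      ≤ (2*N)^δ * (2 * Real.exp (s/(4*N))) * Real.exp (-(s/(2*N))) := by
        apply mul_le_mul_of_nonneg_right _ (Real.exp_nonneg _)
        exact mul_le_mul_of_nonneg_left h2 (Real.rpow_nonneg h2N.le δ)
  _ ≤ 2 * (2*N)^δ * Real.exp (-(s/(4*N))) := by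
        rw [show (2*N)^δ * (2 * Real.exp (s/(4*N))) * Real.exp (-(s/(2*N)))
            = 2 * (2*N)^δ * (Real.exp (s/(4*N)) * Real.exp (-(s/(2*N)))) by ring]
        apply mul_le_mul_of_nonneg_left _ (by positivity)
        rw [← Real.exp_add, Real.exp_le_exp]
        have : 0 ≤ s/(4*N) := by positivity
        have h : s/(4*N) + -(s/(2*N)) = -(s/(4*N)) := by ring
        rw [h]

lemma geom_finset_le {r : ℝ} (h0 : 0 ≤ r) (h1 : r < 1) (T : Finset ℕ) :
    ∑ n ∈ T, r ^ n ≤ (1 - r)⁻¹ := by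
  have hsum : Summable (fun n : ℕ => r ^ n) := summable_geometric_of_lt_one h0 h1
  calc ∑ n ∈ T, r ^ n ≤ ∑' n : ℕ, r ^ n :=
        Summable.sum_le_tsum T (fun i _ => by positivity) hsum
  _ = (1 - r)⁻¹ := tsum_geometric_of_lt_one h0 h1

lemma inv_one_sub_exp_le {x : ℝ} (hx0 : 0 < x) (hx1 : x ≤ 1) :
    (1 - Real.exp (-x))⁻¹ ≤ 2 / x := by
  have he : Real.exp (-x) ≤ 1 - x/2 := by
    have h := Real.add_one_le_exp x
    have hp := Real.exp_pos x
    rw [Real.exp_neg, inv_le_iff_one_le_mul₀ hp]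
    nlinarith
  have h2 : x/2 ≤ 1 - Real.exp (-x) := by linarith
  calc (1 - Real.exp (-x))⁻¹ ≤ (x/2)⁻¹ := inv_anti₀ (by linarith) h2
  _ = 2 / x := by field_simp

lemma sum_exp_sq_le (M : ℝ) (hM : 1 ≤ M) (T : Finset ℕ) :
    ∑ n ∈ T, Real.exp (-((n:ℝ)^2 / M)) ≤ 6 * M ^ ((1:ℝ)/2) := by
  have hM0 : (0:ℝ) < M := by linarith
  set x : ℝ := (M ^ ((1:ℝ)/2))⁻¹ with hxdef
  have hMr : (0:ℝ) < M ^ ((1:ℝ)/2) := Real.rpow_pos_of_pos hM0 _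
  have hMr1 : (1:ℝ) ≤ M ^ ((1:ℝ)/2) := Real.one_le_rpow hM (by norm_num)
  have hx0 : 0 < x := by positivity
  have hx1 : x ≤ 1 := by rw [hxdef]; exact inv_le_one_of_one_le₀ hMr1
  have hsq : M ^ ((1:ℝ)/2) * M ^ ((1:ℝ)/2) = M := by
    rw [← Real.rpow_add hM0]; norm_num
  have key : ∀ n : ℕ, Real.exp (-((n:ℝ)^2 / M)) ≤ Real.exp 1 * (Real.exp (-x)) ^ n := by
    intro n
    rw [← Real.exp_nat_mul, ← Real.exp_add, Real.exp_le_exp]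
    have hge : (n:ℝ)^2 + M ≥ (n:ℝ) * M ^ ((1:ℝ)/2) := by
      rcases le_or_gt (n:ℝ) (M ^ ((1:ℝ)/2)) with h | h
      · nlinarith
      · nlinarith
    have hn : (n:ℝ) * (-x) = -((n:ℝ) / M ^ ((1:ℝ)/2)) := by
      rw [hxdef]; field_simp
    rw [hn]
    generalize hA : M ^ ((1:ℝ)/2) = A at hge hsq hMr ⊢
    rw [← hsq] at hge ⊢
    have hA0 : A ≠ 0 := ne_of_gt hMr
    have h2 : (0:ℝ) < A*A := by positivity
    rw [← sub_nonneg]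
    have h3 : 1 + -((n:ℝ)/A) - -((n:ℝ)^2/(A*A)) = (A*A - n*A + (n:ℝ)^2)/(A*A) := by
      field_simp; ring
    rw [h3]
    apply div_nonneg _ h2.le
    nlinarith
  calc ∑ n ∈ T, Real.exp (-((n:ℝ)^2 / M))
      ≤ ∑ n ∈ T, Real.exp 1 * (Real.exp (-x)) ^ n := Finset.sum_le_sum fun n _ => key n
  _ = Real.exp 1 * ∑ n ∈ T, (Real.exp (-x)) ^ n := by rw [Finset.mul_sum]
  _ ≤ Real.exp 1 * (1 - Real.exp (-x))⁻¹ := by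
      apply mul_le_mul_of_nonneg_left _ (Real.exp_nonneg 1)
      exact geom_finset_le (Real.exp_nonneg _) (Real.exp_lt_one_iff.2 (by linarith)) T
  _ ≤ Real.exp 1 * (2 / x) := by
      apply mul_le_mul_of_nonneg_left (inv_one_sub_exp_le hx0 hx1) (Real.exp_nonneg 1)
  _ = Real.exp 1 * 2 * M ^ ((1:ℝ)/2) := by rw [hxdef]; field_simp
  _ ≤ 6 * M ^ ((1:ℝ)/2) := by
      apply mul_le_mul_of_nonneg_right _ hMr.le
      have := Real.exp_one_lt_d9; linarith

lemma sum_exp_quartic_le (M : ℝ) (hM : 1 ≤ M) (T : Finset ℕ) :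
    ∑ n ∈ T, Real.exp (-((n:ℝ)^4 / M)) ≤ 6 * M ^ ((1:ℝ)/4) := by
  have hM0 : (0:ℝ) < M := by linarith
  set x : ℝ := (M ^ ((1:ℝ)/4))⁻¹ with hxdef
  have hMr : (0:ℝ) < M ^ ((1:ℝ)/4) := Real.rpow_pos_of_pos hM0 _
  have hMr1 : (1:ℝ) ≤ M ^ ((1:ℝ)/4) := Real.one_le_rpow hM (by norm_num)
  have hx0 : 0 < x := by positivity
  have hx1 : x ≤ 1 := by rw [hxdef]; exact inv_le_one_of_one_le₀ hMr1
  have hsq : M ^ ((1:ℝ)/4) * M ^ ((1:ℝ)/4) * M ^ ((1:ℝ)/4) * M ^ ((1:ℝ)/4) = M := by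
    rw [← Real.rpow_add hM0, ← Real.rpow_add hM0, ← Real.rpow_add hM0]; norm_num
  have key : ∀ n : ℕ, Real.exp (-((n:ℝ)^4 / M)) ≤ Real.exp 1 * (Real.exp (-x)) ^ n := by
    intro n
    rw [← Real.exp_nat_mul, ← Real.exp_add, Real.exp_le_exp]
    have hn : (n:ℝ) * (-x) = -((n:ℝ) / M ^ ((1:ℝ)/4)) := by
      rw [hxdef]; field_simp
    rw [hn]
    generalize hA : M ^ ((1:ℝ)/4) = A at hsq hMr ⊢
    rw [← hsq]
    have hn0 : (0:ℝ) ≤ (n:ℝ) := Nat.cast_nonneg n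
    have hge : (n:ℝ)^4 + A*A*A*A ≥ (n:ℝ) * (A*A*A) := by
      rcases le_or_gt (n:ℝ) A with h | h
      · have h3 : (n:ℝ)*(A*A*A) ≤ A*(A*A*A) :=
          mul_le_mul_of_nonneg_right h (by positivity)
        nlinarith [pow_nonneg hn0 4]
      · have h3 : A^3 ≤ (n:ℝ)^3 := pow_le_pow_left₀ hMr.le h.le 3
        have h4 : (n:ℝ)*A^3 ≤ (n:ℝ)*(n:ℝ)^3 := mul_le_mul_of_nonneg_left h3 hn0
        nlinarith
    have h2 : (0:ℝ) < A*A*A*A := by positivity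
    rw [← sub_nonneg]
    have h3 : 1 + -((n:ℝ)/A) - -((n:ℝ)^4/(A*A*A*A))
        = (A*A*A*A - n*(A*A*A) + (n:ℝ)^4)/(A*A*A*A) := by
      field_simp; ring
    rw [h3]
    apply div_nonneg _ h2.le
    nlinarith
  calc ∑ n ∈ T, Real.exp (-((n:ℝ)^4 / M))
      ≤ ∑ n ∈ T, Real.exp 1 * (Real.exp (-x)) ^ n := Finset.sum_le_sum fun n _ => key n
  _ = Real.exp 1 * ∑ n ∈ T, (Real.exp (-x)) ^ n := by rw [Finset.mul_sum]
  _ ≤ Real.exp 1 * (1 - Real.exp (-x))⁻¹ := by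
      apply mul_le_mul_of_nonneg_left _ (Real.exp_nonneg 1)
      exact geom_finset_le (Real.exp_nonneg _) (Real.exp_lt_one_iff.2 (by linarith)) T
  _ ≤ Real.exp 1 * (2 / x) := by
      apply mul_le_mul_of_nonneg_left (inv_one_sub_exp_le hx0 hx1) (Real.exp_nonneg 1)
  _ = Real.exp 1 * 2 * M ^ ((1:ℝ)/4) := by rw [hxdef]; field_simp
  _ ≤ 6 * M ^ ((1:ℝ)/4) := by
      apply mul_le_mul_of_nonneg_right _ hMr.le
      have := Real.exp_one_lt_d9; linarith

lemma sum_exp_four_pow_le {s : ℝ} (hs0 : 0 < s) (hs1 : s ≤ 1) (M : ℝ) (hM : 1 ≤ M)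
    (T : Finset ℕ) :
    ∑ k ∈ T, Real.exp (-((4:ℝ)^k / M)) ≤ (1 - (4:ℝ)^(-s))⁻¹ * M ^ s := by
  have hM0 : (0:ℝ) < M := by linarith
  have hr1 : (4:ℝ)^(-s) < 1 := Real.rpow_lt_one_of_one_lt_of_neg (by norm_num) (by linarith)
  have hr0 : (0:ℝ) ≤ (4:ℝ)^(-s) := Real.rpow_nonneg (by norm_num) _
  have key : ∀ k : ℕ, Real.exp (-((4:ℝ)^k / M)) ≤ M ^ s * ((4:ℝ)^(-s)) ^ k := by
    intro k
    have h4k : (0:ℝ) < (4:ℝ)^k := by positivity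
    calc Real.exp (-((4:ℝ)^k / M)) ≤ ((4:ℝ)^k / M) ^ (-s) :=
          exp_neg_le_rpow_neg (by positivity) hs0.le hs1
    _ = M ^ s * ((4:ℝ)^(-s)) ^ k := by
        rw [Real.div_rpow h4k.le hM0.le, Real.rpow_neg hM0.le, div_inv_eq_mul]
        rw [← Real.rpow_natCast (4:ℝ) k, ← Real.rpow_mul (by norm_num : (0:ℝ) ≤ 4)]
        rw [mul_comm (k:ℝ) (-s), Real.rpow_mul (by norm_num : (0:ℝ) ≤ 4), Real.rpow_natCast]
        ring
  calc ∑ k ∈ T, Real.exp (-((4:ℝ)^k / M)) ≤ ∑ k ∈ T, M ^ s * ((4:ℝ)^(-s)) ^ k :=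
        Finset.sum_le_sum fun k _ => key k
  _ = M ^ s * ∑ k ∈ T, ((4:ℝ)^(-s)) ^ k := by rw [Finset.mul_sum]
  _ ≤ M ^ s * (1 - (4:ℝ)^(-s))⁻¹ := by
      exact mul_le_mul_of_nonneg_left (geom_finset_le hr0 hr1 T) (Real.rpow_nonneg hM0.le s)
  _ = (1 - (4:ℝ)^(-s))⁻¹ * M ^ s := by ring

noncomputable def ppIdx (a : ℕ) : ℕ × ℕ :=
  if h : ∃ p j : ℕ, p.Prime ∧ 2 ≤ j ∧ a = p ^ j then
    (h.choose, h.choose_spec.choose - 2) else (0, 0)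

lemma ppIdx_spec {a : ℕ} (h : ∃ p j : ℕ, p.Prime ∧ 2 ≤ j ∧ a = p ^ j) :
    (ppIdx a).1.Prime ∧ a = (ppIdx a).1 ^ ((ppIdx a).2 + 2) := by
  rw [ppIdx, dif_pos h]
  obtain ⟨hp, hj, he⟩ := h.choose_spec.choose_spec
  refine ⟨hp, ?_⟩
  simp only
  conv_lhs => rw [he]
  congr 1
  omega

lemma sum_pp_le {s : ℝ} (hs0 : 0 < s) (hs1 : s ≤ 1) (M : ℝ) (hM : 1 ≤ M) (T : Finset ℕ)
    (hT : ∀ a ∈ T, ∃ p j : ℕ, p.Prime ∧ 2 ≤ j ∧ a = p ^ j) :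
    ∑ a ∈ T, Real.exp (-((a:ℝ)^2 / M)) ≤
      (24 * (1 - (4:ℝ)^(-s))⁻¹) * M ^ ((1:ℝ)/4 + s) := by
  have hM0 : (0:ℝ) < M := by linarith
  set g : ℕ × ℕ → ℝ :=
    fun y => Real.exp (-((y.1:ℝ)^4 / (2*M))) * Real.exp (-((4:ℝ)^y.2 / (2*M))) with hg
  -- pointwise bound
  have hpt : ∀ a ∈ T, Real.exp (-((a:ℝ)^2 / M)) ≤ g (ppIdx a) := by
    intro a ha
    obtain ⟨hp, he⟩ := ppIdx_spec (hT a ha)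
    set p := (ppIdx a).1; set k := (ppIdx a).2
    have hp2 : 2 ≤ p := hp.two_le
    have hnat : p ^ 4 + 4 ^ k ≤ 2 * a ^ 2 := by
      have h1 : a ^ 2 = p ^ 4 * (p ^ 2) ^ k := by
        rw [he]; ring
      have h2 : 4 ^ k ≤ (p ^ 2) ^ k := Nat.pow_le_pow_left (by nlinarith) k
      have h3 : p ^ 4 * 1 ≤ p ^ 4 * (p^2)^k := Nat.mul_le_mul_left _ (Nat.one_le_pow _ _ (by positivity))
      have h4 : 1 * 4 ^ k ≤ p ^ 4 * (p^2)^k := Nat.mul_le_mul (Nat.one_le_pow _ _ (by omega)) h2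
      omega
    rw [hg]
    simp only [← Real.exp_add]
    rw [Real.exp_le_exp]
    have hcast : ((p:ℝ)^4 + (4:ℝ)^k) ≤ 2 * (a:ℝ)^2 := by
      exact_mod_cast hnat
    have : -((p:ℝ)^4 / (2*M)) + -((4:ℝ)^k / (2*M)) = -(((p:ℝ)^4 + (4:ℝ)^k) / (2*M)) := by
      ring
    rw [this, neg_le_neg_iff, div_le_div_iff₀ (by linarith) hM0]
    nlinarith
  have hinj : Set.InjOn ppIdx T := by
    intro a ha b hb hab
    obtain ⟨_, hea⟩ := ppIdx_spec (hT a ha)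
    obtain ⟨_, heb⟩ := ppIdx_spec (hT b hb)
    rw [hea, heb, hab]
  calc ∑ a ∈ T, Real.exp (-((a:ℝ)^2 / M)) ≤ ∑ a ∈ T, g (ppIdx a) := Finset.sum_le_sum hpt
  _ = ∑ y ∈ T.image ppIdx, g y := (Finset.sum_image (fun a ha b hb => hinj ha hb)).symm
  _ ≤ ∑ y ∈ (T.image ppIdx).image Prod.fst ×ˢ (T.image ppIdx).image Prod.snd, g y := by
      apply Finset.sum_le_sum_of_subset_of_nonneg Finset.subset_product
      intro y _ _; rw [hg]; positivity
  _ = (∑ p ∈ (T.image ppIdx).image Prod.fst, Real.exp (-((p:ℝ)^4 / (2*M)))) *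
      (∑ k ∈ (T.image ppIdx).image Prod.snd, Real.exp (-((4:ℝ)^k / (2*M)))) := by
      rw [Finset.sum_mul_sum, Finset.sum_product]
  _ ≤ (6 * (2*M) ^ ((1:ℝ)/4)) * ((1 - (4:ℝ)^(-s))⁻¹ * (2*M) ^ s) := by
      apply mul_le_mul (sum_exp_quartic_le (2*M) (by linarith) _)
        (sum_exp_four_pow_le hs0 hs1 (2*M) (by linarith) _)
        (Finset.sum_nonneg fun k _ => Real.exp_nonneg _) (by positivity)
  _ ≤ (24 * (1 - (4:ℝ)^(-s))⁻¹) * M ^ ((1:ℝ)/4 + s) := by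
      have h2M : ((2:ℝ)*M) ^ ((1:ℝ)/4) * (2*M) ^ s = (2:ℝ)^((1:ℝ)/4+s) * M ^ ((1:ℝ)/4+s) := by
        rw [← Real.rpow_add (by linarith), Real.mul_rpow (by norm_num) hM0.le]
      have h2s : (2:ℝ)^((1:ℝ)/4+s) ≤ 4 := by
        calc (2:ℝ)^((1:ℝ)/4+s) ≤ (2:ℝ)^(((2:ℕ)):ℝ) :=
              Real.rpow_le_rpow_of_exponent_le (by norm_num) (by push_cast; linarith)
        _ = 4 := by rw [Real.rpow_natCast]; norm_num
      have hinv : (0:ℝ) < (1 - (4:ℝ)^(-s))⁻¹ := by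
        have : (4:ℝ)^(-s) < 1 := Real.rpow_lt_one_of_one_lt_of_neg (by norm_num) (by linarith)
        have h0 : (0:ℝ) < 1 - (4:ℝ)^(-s) := by linarith
        positivity
      have hMp : (0:ℝ) ≤ M ^ ((1:ℝ)/4+s) := Real.rpow_nonneg hM0.le _
      calc (6 * (2*M) ^ ((1:ℝ)/4)) * ((1 - (4:ℝ)^(-s))⁻¹ * (2*M) ^ s)
          = 6 * (1 - (4:ℝ)^(-s))⁻¹ * ((2*M) ^ ((1:ℝ)/4) * (2*M) ^ s) := by ring
      _ = 6 * (1 - (4:ℝ)^(-s))⁻¹ * ((2:ℝ)^((1:ℝ)/4+s) * M ^ ((1:ℝ)/4+s)) := by rw [h2M]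
      _ ≤ 6 * (1 - (4:ℝ)^(-s))⁻¹ * (4 * M ^ ((1:ℝ)/4+s)) := by
          apply mul_le_mul_of_nonneg_left _ (by positivity)
          exact mul_le_mul_of_nonneg_right h2s hMp
      _ = (24 * (1 - (4:ℝ)^(-s))⁻¹) * M ^ ((1:ℝ)/4 + s) := by ring

lemma divisor_bound {δ : ℝ} (hδ : 0 < δ) :
    ∃ C > 0, ∀ n : ℕ, n ≠ 0 → ((n.divisors.card : ℝ)) ≤ C * (n:ℝ) ^ δ := by
  set c : ℝ := δ * Real.log 2 with hc
  have hc0 : 0 < c := mul_pos hδ (Real.log_pos one_lt_two)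
  set C₁ : ℝ := 1 + 1/c with hC₁def
  have hC₁ : 1 ≤ C₁ := le_add_of_nonneg_right (by positivity)
  set P : ℕ := ⌈(2:ℝ) ^ (1/δ)⌉₊ with hP
  refine ⟨C₁ ^ (P+1), by positivity, ?_⟩
  intro n hn
  -- factorization
  have hd : (n.divisors.card : ℝ) =
      ∏ p ∈ n.primeFactors, ((n.factorization p : ℝ) + 1) := by
    rw [Nat.card_divisors hn]
    push_cast
    rfl
  have hnval : (n:ℝ) ^ δ = ∏ p ∈ n.primeFactors, ((p:ℝ) ^ (n.factorization p : ℕ)) ^ δ := by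
    have h1 : (n:ℝ) = ∏ p ∈ n.primeFactors, (p:ℝ) ^ (n.factorization p : ℕ) := by
      conv_lhs => rw [← Nat.factorization_prod_pow_eq_self hn]
      rw [Nat.prod_factorization_eq_prod_primeFactors]
      push_cast
      rfl
    rw [h1, ← Real.finset_prod_rpow _ _ (fun p _ => by positivity)]
  -- per-factor bound
  have hfac : ∀ p ∈ n.primeFactors,
      ((n.factorization p : ℝ) + 1) ≤
        (if (p:ℝ) ^ δ < 2 then C₁ else 1) * ((p:ℝ) ^ (n.factorization p : ℕ)) ^ δ := by
    intro p hp
    have hpp : p.Prime := Nat.prime_of_mem_primeFactors hp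
    have hp2 : (2:ℝ) ≤ (p:ℝ) := by exact_mod_cast hpp.two_le
    set a : ℕ := n.factorization p
    have hkey : ((p:ℝ) ^ (a:ℕ)) ^ δ = ((p:ℝ) ^ δ) ^ (a:ℕ) := by
      rw [← Real.rpow_natCast ((p:ℝ)^δ) a, ← Real.rpow_mul (by linarith), mul_comm,
        Real.rpow_mul (by linarith), Real.rpow_natCast]
    rw [hkey]
    split_ifs with hsmall
    · -- small prime: a + 1 ≤ C₁ * (p^δ)^a, using p^δ ≥ 2^δ = e^c
      have h2δ : Real.exp c ≤ (p:ℝ) ^ δ := by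
        rw [hc, mul_comm, Real.exp_mul, Real.exp_log (by norm_num : (0:ℝ) < 2)]
        exact Real.rpow_le_rpow (by norm_num) hp2 hδ.le
      have hca : Real.exp (c * a) ≤ ((p:ℝ)^δ) ^ (a:ℕ) := by
        rw [mul_comm, Real.exp_nat_mul]
        exact pow_le_pow_left₀ (Real.exp_nonneg c) h2δ a
      have h1 : (a:ℝ) + 1 ≤ C₁ * Real.exp (c * a) := by
        have he1 : (1:ℝ) ≤ Real.exp (c*a) := Real.one_le_exp (by positivity)
        have he2 : c * a + 1 ≤ Real.exp (c*a) := Real.add_one_le_exp (c*a)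
        have : (a:ℝ) ≤ (1/c) * Real.exp (c*a) := by
          rw [one_div, inv_mul_eq_div, le_div_iff₀ hc0]
          nlinarith
        calc (a:ℝ) + 1 ≤ (1/c) * Real.exp (c*a) + Real.exp (c*a) := by linarith
        _ = C₁ * Real.exp (c*a) := by rw [hC₁def]; ring
      calc (a:ℝ) + 1 ≤ C₁ * Real.exp (c * a) := h1
      _ ≤ C₁ * ((p:ℝ)^δ) ^ (a:ℕ) := mul_le_mul_of_nonneg_left hca (by linarith)
    · -- large prime: a + 1 ≤ (p^δ)^a since p^δ ≥ 2
      push_neg at hsmall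
      have h2a : ((a:ℝ) + 1) ≤ (2:ℝ) ^ (a:ℕ) := by
        have : a < 2 ^ a := Nat.lt_two_pow_self
        exact_mod_cast Nat.succ_le_of_lt this
      rw [one_mul]
      calc ((a:ℝ)+1) ≤ (2:ℝ)^(a:ℕ) := h2a
      _ ≤ ((p:ℝ)^δ)^(a:ℕ) := pow_le_pow_left₀ (by norm_num) hsmall a
  -- combine
  have hprod : (n.divisors.card : ℝ) ≤
      (∏ p ∈ n.primeFactors, (if (p:ℝ) ^ δ < 2 then C₁ else 1)) * (n:ℝ) ^ δ := by
    rw [hd, hnval, ← Finset.prod_mul_distrib]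
    exact Finset.prod_le_prod (fun p _ => by positivity) hfac
  -- bound the constant product
  have hconst : (∏ p ∈ n.primeFactors, (if (p:ℝ) ^ δ < 2 then C₁ else 1)) ≤ C₁ ^ (P+1) := by
    classical
    have hsub : n.primeFactors.filter (fun p : ℕ => (p:ℝ) ^ δ < 2) ⊆ Finset.range (P+1) := by
      intro p hp
      rw [Finset.mem_filter] at hp
      rw [Finset.mem_range]
      have hppos : (0:ℝ) ≤ (p:ℝ) := Nat.cast_nonneg p
      have hlt : (p:ℝ) < (2:ℝ) ^ (1/δ) := by
        have h1 : ((p:ℝ) ^ δ) ^ (1/δ) < (2:ℝ) ^ (1/δ) :=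
          Real.rpow_lt_rpow (by positivity) hp.2 (by positivity)
        rwa [← Real.rpow_mul hppos, mul_one_div, div_self (ne_of_gt hδ), Real.rpow_one] at h1
      have h2 : (p:ℝ) < (P:ℝ) + 1 := by
        have h3 := Nat.le_ceil ((2:ℝ) ^ (1/δ))
        rw [hP]; push_cast
        linarith
      exact_mod_cast h2
    calc (∏ p ∈ n.primeFactors, (if (p:ℝ) ^ δ < 2 then C₁ else 1))
        = ∏ p ∈ n.primeFactors.filter (fun p : ℕ => (p:ℝ) ^ δ < 2), C₁ :=
          (Finset.prod_filter _ _).symm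
    _ = C₁ ^ (n.primeFactors.filter (fun p : ℕ => (p:ℝ) ^ δ < 2)).card :=
          Finset.prod_const C₁
    _ ≤ C₁ ^ (P+1) := by
          apply pow_le_pow_right₀ hC₁
          simpa using Finset.card_le_card hsub
  calc (n.divisors.card : ℝ) ≤
      (∏ p ∈ n.primeFactors, (if (p:ℝ) ^ δ < 2 then C₁ else 1)) * (n:ℝ) ^ δ := hprod
  _ ≤ C₁ ^ (P+1) * (n:ℝ) ^ δ := by
      apply mul_le_mul_of_nonneg_right hconst (Real.rpow_nonneg (Nat.cast_nonneg n) δ)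

lemma fiber_card {D : ℤ} (hD : D ≠ 0) (G : Finset (ℕ × ℕ))
    (hG : ∀ x ∈ G, ((x.2:ℤ))^2 - ((x.1:ℤ))^2 = D) :
    G.card ≤ 2 * D.natAbs.divisors.card := by
  classical
  set χ : ℕ × ℕ → ℤ := fun x => (x.2:ℤ) - (x.1:ℤ) with hχ
  have hne : ∀ x ∈ G, χ x ≠ 0 := by
    intro x hx h0
    have h1 := hG x hx
    have h2 : (x.2:ℤ) = (x.1:ℤ) := by rw [hχ] at h0; simp only at h0; linarith [sub_eq_zero.1 h0]
    rw [h2] at h1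
    simp at h1
    exact hD h1.symm
  have hdvd : ∀ x ∈ G, χ x ∣ D := by
    intro x hx
    refine ⟨(x.2:ℤ) + (x.1:ℤ), ?_⟩
    rw [← hG x hx, hχ]
    ring
  have hinj : Set.InjOn χ G := by
    intro x hx y hy hxy
    have hx1 := hG x hx
    have hy1 := hG y hy
    have hu : χ x ≠ 0 := hne x hx
    have hsum : (x.2:ℤ) + (x.1:ℤ) = (y.2:ℤ) + (y.1:ℤ) := by
      apply mul_left_cancel₀ hu
      calc χ x * ((x.2:ℤ) + (x.1:ℤ)) = (x.2:ℤ)^2 - (x.1:ℤ)^2 := by rw [hχ]; ring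
      _ = D := hx1
      _ = (y.2:ℤ)^2 - (y.1:ℤ)^2 := hy1.symm
      _ = χ y * ((y.2:ℤ) + (y.1:ℤ)) := by rw [hχ]; ring
      _ = χ x * ((y.2:ℤ) + (y.1:ℤ)) := by rw [hxy]
    rw [hχ] at hxy
    simp only at hxy
    have h2 : (x.1:ℤ) = (y.1:ℤ) := by linarith [hxy, hsum]
    have h3 : (x.2:ℤ) = (y.2:ℤ) := by linarith
    have e1 : x.1 = y.1 := by exact_mod_cast h2
    have e2 : x.2 = y.2 := by exact_mod_cast h3
    exact Prod.ext e1 e2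
  set T : Finset ℤ := D.natAbs.divisors.image (fun k : ℕ => (k:ℤ)) ∪
      D.natAbs.divisors.image (fun k : ℕ => -(k:ℤ)) with hT
  have himg : G.image χ ⊆ T := by
    intro u hu
    rw [Finset.mem_image] at hu
    obtain ⟨x, hx, rfl⟩ := hu
    have h1 : (χ x).natAbs ∈ D.natAbs.divisors := by
      rw [Nat.mem_divisors]
      exact ⟨Int.natAbs_dvd_natAbs.2 (hdvd x hx), Int.natAbs_ne_zero.2 hD⟩
    rw [hT, Finset.mem_union]
    rcases Int.natAbs_eq (χ x) with h | h
    · left; rw [Finset.mem_image]; exact ⟨(χ x).natAbs, h1, h.symm⟩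
    · right; rw [Finset.mem_image]; exact ⟨(χ x).natAbs, h1, h.symm⟩
  calc G.card = (G.image χ).card := (Finset.card_image_of_injOn hinj).symm
  _ ≤ T.card := Finset.card_le_card himg
  _ ≤ D.natAbs.divisors.card + D.natAbs.divisors.card := by
      rw [hT]
      apply le_trans (Finset.card_union_le _ _)
      gcongr <;> exact Finset.card_image_le
  _ = 2 * D.natAbs.divisors.card := by ring

noncomputable def Cpp (δ : ℝ) : ℝ := 24 * (1 - (4:ℝ)^(-(2*δ)))⁻¹

lemma Cpp_pos {δ : ℝ} (hδ : 0 < δ) : 0 < Cpp δ := by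
  have h1 : (4:ℝ)^(-(2*δ)) < 1 := Real.rpow_lt_one_of_one_lt_of_neg (by norm_num) (by linarith)
  have h0 : (0:ℝ) < 1 - (4:ℝ)^(-(2*δ)) := by linarith
  rw [Cpp]; positivity

lemma sq_eq_of_nat {b c : ℕ} (h : b^2 = c^2) : b = c := by
  rcases lt_trichotomy b c with h' | h' | h'
  · exact absurd h (Nat.ne_of_lt (Nat.pow_lt_pow_left h' (by norm_num)))
  · exact h'
  · exact absurd h.symm (Nat.ne_of_lt (Nat.pow_lt_pow_left h' (by norm_num)))

lemma pointwise_bound {δ : ℝ} (hδ0 : 0 < δ) (hδ1 : 2*δ ≤ 1) {N : ℕ} (hN : 1 ≤ N)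
    {a b c d : ℕ} (hm : a^2 + b^2 = c^2 + d^2) :
    ArithmeticFunction.vonMangoldt a * ArithmeticFunction.vonMangoldt b *
      Real.exp (-2 * ((a:ℝ)^2 + (b:ℝ)^2) / N) * ArithmeticFunction.vonMangoldt c *
      ArithmeticFunction.vonMangoldt d
    ≤ δ⁻¹^4 * (N:ℝ)^(2*δ) *
      (Real.exp (-(((a:ℝ)^2+(d:ℝ)^2)/(2*(N:ℝ)))) * Real.exp (-(((b:ℝ)^2+(c:ℝ)^2)/(2*(N:ℝ))))) := by
  have hN0 : (0:ℝ) < N := by exact_mod_cast Nat.lt_of_lt_of_le Nat.zero_lt_one hN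
  set m : ℝ := (a:ℝ)^2 + (b:ℝ)^2 with hmdef
  have hm2 : m = (c:ℝ)^2 + (d:ℝ)^2 := by rw [hmdef]; exact_mod_cast hm
  have hm0 : 0 ≤ m := by positivity
  have hΛ : ∀ n : ℕ, ArithmeticFunction.vonMangoldt n ≤ (n:ℝ)^δ / δ := fun n =>
    le_trans ArithmeticFunction.vonMangoldt_le_log (Real.log_natCast_le_rpow_div n hδ0)
  have hΛ0 : ∀ n : ℕ, 0 ≤ ArithmeticFunction.vonMangoldt n := fun n =>
    ArithmeticFunction.vonMangoldt_nonneg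
  set E : ℝ := Real.exp (-2 * m / N) with hE
  set w : ℝ := Real.exp (-(((a:ℝ)^2+(d:ℝ)^2)/(2*(N:ℝ)))) *
      Real.exp (-(((b:ℝ)^2+(c:ℝ)^2)/(2*(N:ℝ)))) with hw
  have h1 : ArithmeticFunction.vonMangoldt a * ArithmeticFunction.vonMangoldt b * E *
      ArithmeticFunction.vonMangoldt c * ArithmeticFunction.vonMangoldt d
      ≤ ((a:ℝ)^δ/δ) * ((b:ℝ)^δ/δ) * E * ((c:ℝ)^δ/δ) * ((d:ℝ)^δ/δ) := by
    have hE0 : 0 ≤ E := Real.exp_nonneg _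
    have t1 : ArithmeticFunction.vonMangoldt a * ArithmeticFunction.vonMangoldt b ≤
        ((a:ℝ)^δ/δ) * ((b:ℝ)^δ/δ) := mul_le_mul (hΛ a) (hΛ b) (hΛ0 b) (by positivity)
    have t2 := mul_le_mul_of_nonneg_right t1 hE0
    have t3 : ArithmeticFunction.vonMangoldt a * ArithmeticFunction.vonMangoldt b * E *
        ArithmeticFunction.vonMangoldt c ≤ ((a:ℝ)^δ/δ) * ((b:ℝ)^δ/δ) * E * ((c:ℝ)^δ/δ) :=
      mul_le_mul t2 (hΛ c) (hΛ0 c) (by positivity)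
    exact mul_le_mul t3 (hΛ d) (hΛ0 d) (by positivity)
  have h2 : ((a:ℝ)^δ/δ) * ((b:ℝ)^δ/δ) * E * ((c:ℝ)^δ/δ) * ((d:ℝ)^δ/δ)
      = δ⁻¹^4 * ((a:ℝ)^δ * (b:ℝ)^δ * ((c:ℝ)^δ * (d:ℝ)^δ)) * E := by
    field_simp
  have hab : (a:ℝ)^δ * (b:ℝ)^δ ≤ m^δ := by
    rw [← Real.mul_rpow (Nat.cast_nonneg a) (Nat.cast_nonneg b)]
    apply Real.rpow_le_rpow (by positivity) _ hδ0.le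
    rw [hmdef]; nlinarith [sq_nonneg ((a:ℝ) - (b:ℝ)), sq_nonneg (b:ℝ)]
  have hcd : (c:ℝ)^δ * (d:ℝ)^δ ≤ m^δ := by
    rw [← Real.mul_rpow (Nat.cast_nonneg c) (Nat.cast_nonneg d)]
    apply Real.rpow_le_rpow (by positivity) _ hδ0.le
    rw [hm2]; nlinarith [sq_nonneg ((c:ℝ) - (d:ℝ)), sq_nonneg (d:ℝ)]
  have h3 : (a:ℝ)^δ * (b:ℝ)^δ * ((c:ℝ)^δ * (d:ℝ)^δ) ≤ m^(2*δ) := by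
    calc (a:ℝ)^δ * (b:ℝ)^δ * ((c:ℝ)^δ * (d:ℝ)^δ) ≤ m^δ * m^δ :=
          mul_le_mul hab hcd (by positivity) (Real.rpow_nonneg hm0 δ)
    _ = m^(2*δ) := by rw [← Real.rpow_add' hm0 (by linarith)]; ring_nf
  have hEsplit : E = Real.exp (-(m / N)) * w := by
    rw [hE, hw, ← Real.exp_add, ← Real.exp_add]
    congr 1
    have hcd2 : (c:ℝ)^2+(d:ℝ)^2 = (a:ℝ)^2+(b:ℝ)^2 := hm2.symm.trans hmdef
    have hXY : ((a:ℝ)^2+(d:ℝ)^2) + ((b:ℝ)^2+(c:ℝ)^2) = m + m := by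
      rw [hmdef]; linarith [hcd2]
    have hs1 : ((a:ℝ)^2+(d:ℝ)^2)/(2*(N:ℝ)) + ((b:ℝ)^2+(c:ℝ)^2)/(2*(N:ℝ)) = m / N := by
      rw [← add_div, hXY]
      field_simp
      ring
    have h2' : -2*m/(N:ℝ) = -(m/(N:ℝ)) - (m/(N:ℝ)) := by ring
    linarith [hs1, h2']
  calc ArithmeticFunction.vonMangoldt a * ArithmeticFunction.vonMangoldt b * E *
      ArithmeticFunction.vonMangoldt c * ArithmeticFunction.vonMangoldt d
      ≤ ((a:ℝ)^δ/δ) * ((b:ℝ)^δ/δ) * E * ((c:ℝ)^δ/δ) * ((d:ℝ)^δ/δ) := h1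
  _ = δ⁻¹^4 * ((a:ℝ)^δ * (b:ℝ)^δ * ((c:ℝ)^δ * (d:ℝ)^δ)) * E := h2
  _ ≤ δ⁻¹^4 * m^(2*δ) * E := by
      apply mul_le_mul_of_nonneg_right _ (Real.exp_nonneg _)
      exact mul_le_mul_of_nonneg_left h3 (by positivity)
  _ = δ⁻¹^4 * (m^(2*δ) * Real.exp (-(m / N))) * w := by rw [hEsplit]; ring
  _ ≤ δ⁻¹^4 * (N:ℝ)^(2*δ) * w := by
      apply mul_le_mul_of_nonneg_right _ (by rw [hw]; positivity)
      apply mul_le_mul_of_nonneg_left _ (by positivity)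
      exact rpow_mul_exp_le hm0 hN0 (by linarith) hδ1

set_option maxHeartbeats 2000000 in
lemma key_bound {δ C₂ : ℝ} (hδ0 : 0 < δ) (hδ1 : δ ≤ 1/128) (hC₂0 : 0 < C₂)
    (hdiv : ∀ n : ℕ, n ≠ 0 → ((n.divisors.card : ℝ)) ≤ C₂ * (n:ℝ)^δ)
    {N : ℕ} (hN : 1 ≤ N) (F : Finset (ℕ×ℕ×ℕ×ℕ)) :
    ∑ q ∈ F, properPowerTerm N q ≤
      δ⁻¹^4 * (6*Cpp δ + 768*C₂*Cpp δ) * (N:ℝ)^((3:ℝ)/4 + 5*δ) := by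
  classical
  have hN0 : (0:ℝ) < N := by exact_mod_cast Nat.lt_of_lt_of_le Nat.zero_lt_one hN
  have hN1 : (1:ℝ) ≤ N := by exact_mod_cast hN
  have hNne : (N:ℝ) ≠ 0 := ne_of_gt hN0
  set P : ℕ×ℕ×ℕ×ℕ → Prop := fun q => 2 ≤ q.1 ∧ 2 ≤ q.2.1 ∧ 2 ≤ q.2.2.1 ∧ 2 ≤ q.2.2.2 ∧
      q.1 ^ 2 + q.2.1 ^ 2 = q.2.2.1 ^ 2 + q.2.2.2 ^ 2 ∧
      (∃ p j : ℕ, p.Prime ∧ 2 ≤ j ∧ q.1 = p ^ j) with hPdef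
  set w : ℕ×ℕ×ℕ×ℕ → ℝ := fun q =>
      Real.exp (-(((q.1:ℝ)^2+(q.2.2.2:ℝ)^2)/(2*(N:ℝ)))) *
      Real.exp (-(((q.2.1:ℝ)^2+(q.2.2.1:ℝ)^2)/(2*(N:ℝ)))) with hwdef
  have hw0 : ∀ q, 0 ≤ w q := fun q => by rw [hwdef]; positivity
  set F' := F.filter P with hF'
  have hstep1 : ∑ q ∈ F, properPowerTerm N q = ∑ q ∈ F', properPowerTerm N q := by
    rw [hF']
    refine (Finset.sum_filter_of_ne ?_).symm
    intro q _ hq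
    by_contra hPq
    exact hq (by rw [properPowerTerm, if_neg hPq])
  have hstep2 : ∑ q ∈ F', properPowerTerm N q ≤
      δ⁻¹^4 * (N:ℝ)^(2*δ) * ∑ q ∈ F', w q := by
    rw [Finset.mul_sum]
    apply Finset.sum_le_sum
    intro q hq
    have hPq : P q := (Finset.mem_filter.1 hq).2
    obtain ⟨h2a, h2b, h2c, h2d, hm, hpp⟩ := hPq
    rw [properPowerTerm, if_pos ⟨h2a, h2b, h2c, h2d, hm, hpp⟩]
    exact pointwise_bound hδ0 (by linarith) hN hm
  set F₀ := F'.filter (fun q => q.1 = q.2.2.2) with hF₀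
  set F₁ := F'.filter (fun q => ¬ (q.1 = q.2.2.2)) with hF₁
  have hsplit : ∑ q ∈ F', w q = ∑ q ∈ F₀, w q + ∑ q ∈ F₁, w q :=
    (Finset.sum_filter_add_sum_filter_not F' _ w).symm
  have hF0mem : ∀ q ∈ F₀, P q ∧ q.1 = q.2.2.2 ∧ q.2.1 = q.2.2.1 := by
    intro q hq
    rw [hF₀, Finset.mem_filter] at hq
    obtain ⟨hq1, heq⟩ := hq
    have hPq : P q := (Finset.mem_filter.1 hq1).2
    refine ⟨hPq, heq, ?_⟩
    obtain ⟨_, _, _, _, hm, _⟩ := hPq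
    apply sq_eq_of_nat
    rw [heq] at hm
    zify at hm ⊢
    linarith
  have hpart0 : ∑ q ∈ F₀, w q ≤ (Cpp δ * (N:ℝ)^((1:ℝ)/4 + 2*δ)) * (6 * (N:ℝ)^((1:ℝ)/2)) := by
    set φ₀ : ℕ×ℕ×ℕ×ℕ → ℕ×ℕ := fun q => (q.1, q.2.1) with hφ₀
    have hinj0 : ∀ x ∈ F₀, ∀ y ∈ F₀, φ₀ x = φ₀ y → x = y := by
      intro x hx y hy hxy
      obtain ⟨_, hx1, hx2⟩ := hF0mem x hx
      obtain ⟨_, hy1, hy2⟩ := hF0mem y hy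
      simp only [hφ₀, Prod.mk.injEq] at hxy
      obtain ⟨e1, e2⟩ := hxy
      refine Prod.ext e1 (Prod.ext e2 (Prod.ext ?_ ?_))
      · show x.2.2.1 = y.2.2.1
        rw [← hx2, ← hy2]; exact e2
      · show x.2.2.2 = y.2.2.2
        rw [← hx1, ← hy1]; exact e1
    set g : ℕ×ℕ → ℝ := fun y =>
        Real.exp (-((y.1:ℝ)^2/(N:ℝ))) * Real.exp (-((y.2:ℝ)^2/(N:ℝ))) with hgdef
    have hsum0 : ∑ q ∈ F₀, w q = ∑ y ∈ F₀.image φ₀, g y := by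
      rw [Finset.sum_image hinj0]
      apply Finset.sum_congr rfl
      intro q hq
      obtain ⟨_, h1, h2⟩ := hF0mem q hq
      rw [hwdef, hgdef]
      simp only [hφ₀]
      rw [← h1, ← h2]
      have ed : ∀ t : ℝ, (t+t)/(2*(N:ℝ)) = t/(N:ℝ) := by
        intro t; field_simp; ring
      rw [ed ((q.1:ℝ)^2), ed ((q.2.1:ℝ)^2)]
    have hg0 : ∀ y, 0 ≤ g y := fun y => by rw [hgdef]; positivity
    set I₀ := F₀.image φ₀ with hI₀
    have hppX : ∀ x ∈ I₀.image Prod.fst, ∃ p j : ℕ, p.Prime ∧ 2 ≤ j ∧ x = p^j := by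
      intro x hx
      rw [Finset.mem_image] at hx
      obtain ⟨y, hy, rfl⟩ := hx
      rw [hI₀, Finset.mem_image] at hy
      obtain ⟨q, hq, rfl⟩ := hy
      exact (hF0mem q hq).1.2.2.2.2.2
    calc ∑ q ∈ F₀, w q = ∑ y ∈ I₀, g y := hsum0
    _ ≤ ∑ y ∈ I₀.image Prod.fst ×ˢ I₀.image Prod.snd, g y :=
        Finset.sum_le_sum_of_subset_of_nonneg Finset.subset_product
          (fun y _ _ => hg0 y)
    _ = (∑ x ∈ I₀.image Prod.fst, Real.exp (-((x:ℝ)^2/(N:ℝ)))) *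
        (∑ z ∈ I₀.image Prod.snd, Real.exp (-((z:ℝ)^2/(N:ℝ)))) := by
        rw [Finset.sum_mul_sum, Finset.sum_product]
    _ ≤ (Cpp δ * (N:ℝ)^((1:ℝ)/4 + 2*δ)) * (6 * (N:ℝ)^((1:ℝ)/2)) := by
        apply mul_le_mul
        · exact sum_pp_le (by linarith) (by linarith) (N:ℝ) hN1 _ hppX
        · exact sum_exp_sq_le (N:ℝ) hN1 _
        · exact Finset.sum_nonneg fun z _ => Real.exp_nonneg _
        · have := Cpp_pos hδ0; positivity
  have hF1mem : ∀ q ∈ F₁, P q ∧ q.1 ≠ q.2.2.2 := by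
    intro q hq
    rw [hF₁, Finset.mem_filter] at hq
    exact ⟨(Finset.mem_filter.1 hq.1).2, hq.2⟩
  have hpart1 : ∑ q ∈ F₁, w q ≤
      4*C₂*(2*(N:ℝ))^δ * ((Cpp δ * (4*(N:ℝ))^((1:ℝ)/4+2*δ)) * (6*(4*(N:ℝ))^((1:ℝ)/2))) := by
    set φ₁ : ℕ×ℕ×ℕ×ℕ → ℕ×ℕ := fun q => (q.1, q.2.2.2) with hφ₁
    set I₁ := F₁.image φ₁ with hI₁
    have hfib : ∑ q ∈ F₁, w q =
        ∑ y ∈ I₁, ∑ q ∈ F₁.filter (fun q => φ₁ q = y), w q :=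
      (Finset.sum_fiberwise_of_maps_to (fun q hq => Finset.mem_image_of_mem φ₁ hq) w).symm
    set h : ℕ×ℕ → ℝ := fun y => Real.exp (-((y.1:ℝ)^2/(4*(N:ℝ)))) *
        Real.exp (-((y.2:ℝ)^2/(4*(N:ℝ)))) with hhdef
    have hh0 : ∀ y, 0 ≤ h y := fun y => by rw [hhdef]; positivity
    have hinner : ∀ y ∈ I₁, ∑ q ∈ F₁.filter (fun q => φ₁ q = y), w q ≤
        4*C₂*(2*(N:ℝ))^δ * h y := by
      intro y hy
      obtain ⟨x, z⟩ := y
      obtain ⟨q₀, hq₀, hq₀y⟩ := Finset.mem_image.1 hy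
      obtain ⟨hP₀, hne₀⟩ := hF1mem q₀ hq₀
      rw [hφ₁, Prod.mk.injEq] at hq₀y
      have hxz : x ≠ z := by rw [← hq₀y.1, ← hq₀y.2]; exact hne₀
      set D : ℤ := (x:ℤ)^2 - (z:ℤ)^2 with hD
      have hDne : D ≠ 0 := by
        intro h0
        rw [hD, sub_eq_zero] at h0
        have hx2 : x^2 = z^2 := by exact_mod_cast h0
        exact hxz (sq_eq_of_nat hx2)
      set fib := F₁.filter (fun q => φ₁ q = (x, z)) with hfibdef
      have hfibmem : ∀ q ∈ fib, q.1 = x ∧ q.2.2.2 = z ∧ P q := by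
        intro q hq
        rw [hfibdef, Finset.mem_filter] at hq
        obtain ⟨hq1, hqy⟩ := hq
        rw [hφ₁, Prod.mk.injEq] at hqy
        exact ⟨hqy.1, hqy.2, (hF1mem q hq1).1⟩
      set G := fib.image (fun q : ℕ×ℕ×ℕ×ℕ => (q.2.1, q.2.2.1)) with hGdef
      have hinjG : ∀ u ∈ fib, ∀ v ∈ fib, (u.2.1, u.2.2.1) = (v.2.1, v.2.2.1) → u = v := by
        intro u hu v hv huv
        obtain ⟨eu1, eu2, _⟩ := hfibmem u hu
        obtain ⟨ev1, ev2, _⟩ := hfibmem v hv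
        rw [Prod.mk.injEq] at huv
        obtain ⟨f1, f2⟩ := huv
        refine Prod.ext ?_ (Prod.ext f1 (Prod.ext f2 ?_))
        · show u.1 = v.1; rw [eu1, ev1]
        · show u.2.2.2 = v.2.2.2; rw [eu2, ev2]
      have hGcard : fib.card = G.card := (Finset.card_image_of_injOn
        (fun u hu v hv => hinjG u hu v hv)).symm
      have hG : ∀ v ∈ G, ((v.2:ℤ))^2 - ((v.1:ℤ))^2 = D := by
        intro v hv
        obtain ⟨q, hq, rfl⟩ := Finset.mem_image.1 hv
        obtain ⟨e1, e2, hPq⟩ := hfibmem q hq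
        have hmq := hPq.2.2.2.2.1
        rw [e1, e2] at hmq
        have hcast := congrArg (Nat.cast : ℕ → ℤ) hmq
        push_cast at hcast
        rw [hD]
        linarith
      have hcard : (fib.card : ℝ) ≤ 2 * C₂ * (((x:ℝ)^2 + (z:ℝ)^2))^δ := by
        have h1 : fib.card ≤ 2 * D.natAbs.divisors.card := hGcard ▸ fiber_card hDne G hG
        have h2 : ((D.natAbs.divisors.card : ℕ) : ℝ) ≤ C₂ * (D.natAbs:ℝ)^δ :=
          hdiv _ (Int.natAbs_ne_zero.2 hDne)
        have h3n : D.natAbs ≤ x^2 + z^2 := by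
          have habs : |D| ≤ ((x^2 + z^2 : ℕ) : ℤ) := by
            rw [hD]
            push_cast
            rw [abs_le]
            constructor
            · nlinarith [sq_nonneg ((x:ℤ)), sq_nonneg ((z:ℤ))]
            · nlinarith [sq_nonneg ((x:ℤ)), sq_nonneg ((z:ℤ))]
          rw [Int.abs_eq_natAbs] at habs
          exact_mod_cast habs
        have h3 : (D.natAbs : ℝ) ≤ (x:ℝ)^2 + (z:ℝ)^2 := by exact_mod_cast h3n
        have h4 : (D.natAbs:ℝ)^δ ≤ ((x:ℝ)^2+(z:ℝ)^2)^δ :=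
          Real.rpow_le_rpow (Nat.cast_nonneg _) h3 hδ0.le
        calc (fib.card:ℝ) ≤ 2 * ((D.natAbs.divisors.card : ℕ):ℝ) := by exact_mod_cast h1
        _ ≤ 2 * (C₂ * (D.natAbs:ℝ)^δ) := by linarith
        _ ≤ 2 * C₂ * ((x:ℝ)^2+(z:ℝ)^2)^δ := by
            rw [show (2:ℝ) * (C₂ * (D.natAbs:ℝ)^δ) = 2*C₂*((D.natAbs:ℝ)^δ) by ring]
            exact mul_le_mul_of_nonneg_left h4 (by positivity)
      set s : ℝ := (x:ℝ)^2 + (z:ℝ)^2 with hsdef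
      have hs0 : 0 ≤ s := by rw [hsdef]; positivity
      have hwle : ∀ q ∈ fib, w q ≤ Real.exp (-(s/(2*(N:ℝ)))) := by
        intro q hq
        obtain ⟨e1, e2, _⟩ := hfibmem q hq
        rw [hwdef]
        dsimp only
        rw [e1, e2]
        rw [← hsdef]
        apply mul_le_of_le_one_right (Real.exp_nonneg _)
        rw [Real.exp_le_one_iff]
        have : (0:ℝ) ≤ ((q.2.1:ℝ)^2+(q.2.2.1:ℝ)^2)/(2*(N:ℝ)) := by positivity
        linarith
      have hsum : ∑ q ∈ fib, w q ≤ (fib.card : ℝ) * Real.exp (-(s/(2*(N:ℝ)))) := by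
        calc ∑ q ∈ fib, w q ≤ ∑ _q ∈ fib, Real.exp (-(s/(2*(N:ℝ)))) :=
              Finset.sum_le_sum hwle
        _ = (fib.card : ℝ) * Real.exp (-(s/(2*(N:ℝ)))) := by
            rw [Finset.sum_const, nsmul_eq_mul]
      have hexps : Real.exp (-(s/(4*(N:ℝ)))) = h (x, z) := by
        rw [hhdef]
        dsimp only
        rw [← Real.exp_add]
        congr 1
        rw [← neg_add, ← add_div, hsdef]
      calc ∑ q ∈ fib, w q ≤ (fib.card : ℝ) * Real.exp (-(s/(2*(N:ℝ)))) := hsum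
      _ ≤ (2 * C₂ * s^δ) * Real.exp (-(s/(2*(N:ℝ)))) := by
          apply mul_le_mul_of_nonneg_right _ (Real.exp_nonneg _)
          rw [hsdef]; exact hcard
      _ = 2*C₂ * (s^δ * Real.exp (-(s/(2*(N:ℝ))))) := by ring
      _ ≤ 2*C₂ * (2 * (2*(N:ℝ))^δ * Real.exp (-(s/(4*(N:ℝ))))) := by
          apply mul_le_mul_of_nonneg_left _ (by positivity)
          exact rpow_mul_exp_half hs0 hN0 hδ0.le (by linarith)
      _ = 4*C₂*(2*(N:ℝ))^δ * Real.exp (-(s/(4*(N:ℝ)))) := by ring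
      _ = 4*C₂*(2*(N:ℝ))^δ * h (x, z) := by rw [hexps]
    have hppX1 : ∀ x ∈ I₁.image Prod.fst, ∃ p j : ℕ, p.Prime ∧ 2 ≤ j ∧ x = p^j := by
      intro x hx
      rw [Finset.mem_image] at hx
      obtain ⟨y, hy, rfl⟩ := hx
      rw [hI₁, Finset.mem_image] at hy
      obtain ⟨q, hq, rfl⟩ := hy
      exact (hF1mem q hq).1.2.2.2.2.2
    have hM4 : (1:ℝ) ≤ 4*(N:ℝ) := by linarith
    calc ∑ q ∈ F₁, w q = ∑ y ∈ I₁, ∑ q ∈ F₁.filter (fun q => φ₁ q = y), w q := hfib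
    _ ≤ ∑ y ∈ I₁, 4*C₂*(2*(N:ℝ))^δ * h y := Finset.sum_le_sum hinner
    _ = 4*C₂*(2*(N:ℝ))^δ * ∑ y ∈ I₁, h y := by rw [← Finset.mul_sum]
    _ ≤ 4*C₂*(2*(N:ℝ))^δ * ((Cpp δ * (4*(N:ℝ))^((1:ℝ)/4+2*δ)) * (6*(4*(N:ℝ))^((1:ℝ)/2))) := by
        apply mul_le_mul_of_nonneg_left _ (by positivity)
        calc ∑ y ∈ I₁, h y
            ≤ ∑ y ∈ I₁.image Prod.fst ×ˢ I₁.image Prod.snd, h y :=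
              Finset.sum_le_sum_of_subset_of_nonneg Finset.subset_product
                (fun y _ _ => hh0 y)
        _ = (∑ x ∈ I₁.image Prod.fst, Real.exp (-((x:ℝ)^2/(4*(N:ℝ))))) *
            (∑ z ∈ I₁.image Prod.snd, Real.exp (-((z:ℝ)^2/(4*(N:ℝ))))) := by
            rw [Finset.sum_mul_sum, Finset.sum_product]
        _ ≤ (Cpp δ * (4*(N:ℝ))^((1:ℝ)/4+2*δ)) * (6*(4*(N:ℝ))^((1:ℝ)/2)) := by
            apply mul_le_mul
            · exact sum_pp_le (by linarith) (by linarith) (4*(N:ℝ)) hM4 _ hppX1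
            · exact sum_exp_sq_le (4*(N:ℝ)) hM4 _
            · exact Finset.sum_nonneg fun z _ => Real.exp_nonneg _
            · have := Cpp_pos hδ0; positivity
  -- final numeric assembly
  have hA := hN1
  set A : ℝ := (N:ℝ) with hAdef
  have hA0 : (0:ℝ) < A := hN0
  have hmulA : ∀ (u v : ℝ), A^u * A^v = A^(u+v) := fun u v => (Real.rpow_add hA0 u v).symm
  have hmono : ∀ {u v : ℝ}, u ≤ v → A^u ≤ A^v := fun h => Real.rpow_le_rpow_of_exponent_le hA h
  have hc2 : (2:ℝ)^δ ≤ 2 := by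
    calc (2:ℝ)^δ ≤ (2:ℝ)^(1:ℝ) := Real.rpow_le_rpow_of_exponent_le one_le_two (by linarith)
    _ = 2 := Real.rpow_one 2
  have hc4a : (4:ℝ)^((1:ℝ)/4+2*δ) ≤ 4 := by
    calc (4:ℝ)^((1:ℝ)/4+2*δ) ≤ (4:ℝ)^(1:ℝ) :=
          Real.rpow_le_rpow_of_exponent_le (by norm_num) (by linarith)
    _ = 4 := Real.rpow_one 4
  have hc4b : (4:ℝ)^((1:ℝ)/2) ≤ 4 := by
    calc (4:ℝ)^((1:ℝ)/2) ≤ (4:ℝ)^(1:ℝ) :=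
          Real.rpow_le_rpow_of_exponent_le (by norm_num) (by norm_num)
    _ = 4 := Real.rpow_one 4
  have hCpp0 : 0 < Cpp δ := Cpp_pos hδ0
  have hT0 : (Cpp δ * A^((1:ℝ)/4 + 2*δ)) * (6 * A^((1:ℝ)/2)) ≤ 6 * Cpp δ * A^((3:ℝ)/4+3*δ) := by
    have h1 : A^((1:ℝ)/4 + 2*δ) * A^((1:ℝ)/2) = A^((1:ℝ)/4+2*δ+(1:ℝ)/2) := hmulA _ _
    have h2 : A^((1:ℝ)/4+2*δ+(1:ℝ)/2) ≤ A^((3:ℝ)/4+3*δ) := hmono (by linarith)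
    calc (Cpp δ * A^((1:ℝ)/4 + 2*δ)) * (6 * A^((1:ℝ)/2))
        = 6 * Cpp δ * (A^((1:ℝ)/4 + 2*δ) * A^((1:ℝ)/2)) := by ring
    _ = 6 * Cpp δ * A^((1:ℝ)/4+2*δ+(1:ℝ)/2) := by rw [h1]
    _ ≤ 6 * Cpp δ * A^((3:ℝ)/4+3*δ) := by
        apply mul_le_mul_of_nonneg_left h2 (by positivity)
  have hT1 : 4*C₂*(2*A)^δ * ((Cpp δ * (4*A)^((1:ℝ)/4+2*δ)) * (6*(4*A)^((1:ℝ)/2)))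
      ≤ 768*C₂*Cpp δ * A^((3:ℝ)/4+3*δ) := by
    have e1 : (2*A)^δ = (2:ℝ)^δ * A^δ := Real.mul_rpow (by norm_num) hA0.le
    have e2 : (4*A)^((1:ℝ)/4+2*δ) = (4:ℝ)^((1:ℝ)/4+2*δ) * A^((1:ℝ)/4+2*δ) :=
      Real.mul_rpow (by norm_num) hA0.le
    have e3 : (4*A)^((1:ℝ)/2) = (4:ℝ)^((1:ℝ)/2) * A^((1:ℝ)/2) :=
      Real.mul_rpow (by norm_num) hA0.le
    have hAp : ∀ u : ℝ, 0 ≤ A^u := fun u => Real.rpow_nonneg hA0.le u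
    have h1 : (2*A)^δ ≤ 2 * A^δ := by
      rw [e1]; exact mul_le_mul_of_nonneg_right hc2 (hAp δ)
    have h2 : (4*A)^((1:ℝ)/4+2*δ) ≤ 4 * A^((1:ℝ)/4+2*δ) := by
      rw [e2]; exact mul_le_mul_of_nonneg_right hc4a (hAp _)
    have h3 : (4*A)^((1:ℝ)/2) ≤ 4 * A^((1:ℝ)/2) := by
      rw [e3]; exact mul_le_mul_of_nonneg_right hc4b (hAp _)
    have hprod : A^δ * (A^((1:ℝ)/4+2*δ) * A^((1:ℝ)/2)) = A^(δ+((1:ℝ)/4+2*δ+(1:ℝ)/2)) := by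
      rw [hmulA, hmulA]
    calc 4*C₂*(2*A)^δ * ((Cpp δ * (4*A)^((1:ℝ)/4+2*δ)) * (6*(4*A)^((1:ℝ)/2)))
        ≤ 4*C₂*(2*A^δ) * ((Cpp δ * (4 * A^((1:ℝ)/4+2*δ))) * (6*(4*A^((1:ℝ)/2)))) := by
          apply mul_le_mul
          · exact mul_le_mul_of_nonneg_left h1 (by positivity)
          · apply mul_le_mul
            · exact mul_le_mul_of_nonneg_left h2 (by positivity)
            · exact mul_le_mul_of_nonneg_left h3 (by positivity)
            · positivity
            · positivity
          · positivity
          · positivity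
    _ = 768*C₂*Cpp δ * (A^δ * (A^((1:ℝ)/4+2*δ) * A^((1:ℝ)/2))) := by ring
    _ = 768*C₂*Cpp δ * A^(δ+((1:ℝ)/4+2*δ+(1:ℝ)/2)) := by rw [hprod]
    _ ≤ 768*C₂*Cpp δ * A^((3:ℝ)/4+3*δ) := by
        apply mul_le_mul_of_nonneg_left (hmono (by linarith)) (by positivity)
  calc ∑ q ∈ F, properPowerTerm N q = ∑ q ∈ F', properPowerTerm N q := hstep1
  _ ≤ δ⁻¹^4 * A^(2*δ) * ∑ q ∈ F', w q := hstep2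
  _ = δ⁻¹^4 * A^(2*δ) * (∑ q ∈ F₀, w q + ∑ q ∈ F₁, w q) := by rw [hsplit]
  _ ≤ δ⁻¹^4 * A^(2*δ) * (6 * Cpp δ * A^((3:ℝ)/4+3*δ) + 768*C₂*Cpp δ * A^((3:ℝ)/4+3*δ)) := by
      apply mul_le_mul_of_nonneg_left _ (by positivity)
      exact add_le_add (le_trans hpart0 hT0) (le_trans hpart1 hT1)
  _ = δ⁻¹^4 * (6*Cpp δ + 768*C₂*Cpp δ) * (A^(2*δ) * A^((3:ℝ)/4+3*δ)) := by ring
  _ = δ⁻¹^4 * (6*Cpp δ + 768*C₂*Cpp δ) * A^(2*δ+((3:ℝ)/4+3*δ)) := by rw [hmulA]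
  _ = δ⁻¹^4 * (6*Cpp δ + 768*C₂*Cpp δ) * A^((3:ℝ)/4+5*δ) := by ring_nf

theorem properPower_quadruple_bound :
    ∀ ε : ℝ, 0 < ε → ∃ C > (0 : ℝ), ∃ N₀ : ℕ, ∀ N : ℕ, N₀ ≤ N →
      Summable (properPowerTerm N) ∧
        ∑' q, properPowerTerm N q ≤ C * (N : ℝ) ^ ((3 : ℝ) / 4 + ε) := by
  intro ε hε
  set δ : ℝ := min ε (1/16) / 8 with hδdef
  have hmin0 : 0 < min ε (1/16) := lt_min hε (by norm_num)
  have hδ0 : 0 < δ := by rw [hδdef]; positivity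
  have hδ1 : δ ≤ 1/128 := by
    have h := min_le_right ε (1/16)
    rw [hδdef]; linarith
  have h5δ : 5*δ ≤ ε := by
    have h1 := min_le_left ε (1/16)
    rw [hδdef]; linarith [hmin0]
  obtain ⟨C₂, hC₂0, hdiv⟩ := divisor_bound hδ0
  have hCpp := Cpp_pos hδ0
  refine ⟨δ⁻¹^4 * (6*Cpp δ + 768*C₂*Cpp δ), by positivity, 1, ?_⟩
  intro N hN
  have hN1 : (1:ℝ) ≤ N := by exact_mod_cast hN
  have hnonneg : ∀ q, 0 ≤ properPowerTerm N q := by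
    intro q
    rw [properPowerTerm]
    split_ifs
    · have h0 : ∀ n : ℕ, 0 ≤ ArithmeticFunction.vonMangoldt n := fun n =>
        ArithmeticFunction.vonMangoldt_nonneg
      have hE := Real.exp_nonneg (-2 * ((q.1:ℝ)^2 + (q.2.1:ℝ)^2) / N)
      exact mul_nonneg (mul_nonneg (mul_nonneg (mul_nonneg (h0 _) (h0 _)) hE) (h0 _)) (h0 _)
    · exact le_refl 0
  have hkey : ∀ u : Finset (ℕ×ℕ×ℕ×ℕ), ∑ q ∈ u, properPowerTerm N q ≤
      δ⁻¹^4 * (6*Cpp δ + 768*C₂*Cpp δ) * (N:ℝ)^((3:ℝ)/4 + ε) := by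
    intro u
    calc ∑ q ∈ u, properPowerTerm N q
        ≤ δ⁻¹^4*(6*Cpp δ+768*C₂*Cpp δ) * (N:ℝ)^((3:ℝ)/4+5*δ) :=
          key_bound hδ0 hδ1 hC₂0 hdiv hN u
    _ ≤ δ⁻¹^4*(6*Cpp δ+768*C₂*Cpp δ) * (N:ℝ)^((3:ℝ)/4+ε) := by
        apply mul_le_mul_of_nonneg_left
          (Real.rpow_le_rpow_of_exponent_le hN1 (by linarith)) (by positivity)
  have hsummable : Summable (properPowerTerm N) :=
    summable_of_sum_le (fun q => hnonneg q) hkey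
  exact ⟨hsummable, hsummable.tsum_le_of_sum_le hkey⟩
end

section
/- For every integer n ≥ 2, R(n) = r(n) + O( n^{3/4} (log n)³ ), i.e. the contribution to R(n) of triples in which at least one of the three variables is a proper prime power is ≪ n^{3/4} (log n)³. -/
open Finset

open Finset

/-- roots of x^2+1 mod m, as naturals below m -/
def Sroots (m : ℕ) : Finset ℕ := (Finset.range m).filter (fun x => m ∣ x^2+1)

lemma sroots_card_prime_pow {p k : ℕ} (hp : p.Prime) (hk : 0 < k) :
    (Sroots (p^k)).card ≤ 2 := by
  rcases eq_or_ne p 2 with rfl | hodd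
  · rcases Nat.lt_or_ge k 2 with hk2 | hk2
    · interval_cases k
      have h : Sroots (2^1) ⊆ Finset.range 2 := by
        simpa [Sroots] using Finset.filter_subset _ _
      simpa using Finset.card_le_card h
    · have : Sroots (2^k) = ∅ := by
        ext x
        simp only [Sroots, Finset.mem_filter, Finset.mem_range, Finset.notMem_empty, iff_false,
          not_and]
        intro _ hdvd
        have h4 : (4:ℕ) ∣ x^2+1 := by
          refine dvd_trans ?_ hdvd
          have : (2:ℕ)^2 ∣ 2^k := pow_dvd_pow 2 hk2
          simpa using this
        have h2 : (x ^ 2 + 1) % 4 = ((x % 4) ^ 2 + 1) % 4 := by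
          conv_lhs => rw [Nat.add_mod, Nat.pow_mod]
          conv_rhs => rw [Nat.add_mod, Nat.pow_mod]
          simp
        have h0 : (x ^ 2 + 1) % 4 = 0 := Nat.mod_eq_zero_of_dvd h4
        rw [h2] at h0
        have hx4 : x % 4 < 4 := Nat.mod_lt _ (by norm_num)
        interval_cases h : x % 4 <;> norm_num at h0
      simp [this]
  · -- p odd
    have hp2 : 2 < p := lt_of_le_of_ne hp.two_le (Ne.symm hodd)
    rcases Finset.eq_empty_or_nonempty (Sroots (p^k)) with he | ⟨y, hy⟩
    · simp [he]
    · have hsub : Sroots (p^k) ⊆ {y, p^k - y} := by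
        intro x hx
        simp only [Sroots, Finset.mem_filter, Finset.mem_range] at hx hy
        obtain ⟨hxlt, hxd⟩ := hx
        obtain ⟨hylt, hyd⟩ := hy
        have hxdz : (p:ℤ)^k ∣ (x:ℤ)^2 + 1 := by exact_mod_cast Int.natCast_dvd_natCast.2 hxd
        have hydz : (p:ℤ)^k ∣ (y:ℤ)^2 + 1 := by exact_mod_cast Int.natCast_dvd_natCast.2 hyd
        have hdvd : (p:ℤ)^k ∣ ((x:ℤ) - y) * ((x:ℤ) + y) := by
          have h : ((x:ℤ) - y) * ((x:ℤ) + y) = ((x:ℤ)^2 + 1) - ((y:ℤ)^2 + 1) := by ring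
          rw [h]; exact dvd_sub hxdz hydz
        have hpz : Prime (p:ℤ) := Nat.prime_iff_prime_int.mp hp
        have h1 : (x:ℤ) < (p:ℤ)^k := by exact_mod_cast hxlt
        have h2 : (y:ℤ) < (p:ℤ)^k := by exact_mod_cast hylt
        have hnotboth : ¬ ((p:ℤ) ∣ ((x:ℤ) - y) ∧ (p:ℤ) ∣ ((x:ℤ) + y)) := by
          rintro ⟨ha, hb⟩
          have h2x : (p:ℤ) ∣ 2 * x := by
            have h := dvd_add ha hb
            have he : (x:ℤ) - y + ((x:ℤ) + y) = 2 * x := by ring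
            rwa [he] at h
          have hpx : (p:ℤ) ∣ (x:ℤ) := by
            rcases hpz.dvd_mul.1 h2x with h | h
            · exfalso
              have h2 : (p:ℕ) ∣ 2 := by exact_mod_cast h
              have := Nat.le_of_dvd (by norm_num) h2
              omega
            · exact h
          have hp1 : (p:ℤ) ∣ 1 := by
            have hpk1 : (p:ℤ) ∣ (x:ℤ)^2 + 1 :=
              dvd_trans (dvd_pow_self (p:ℤ) hk.ne') hxdz
            have hpx2 : (p:ℤ) ∣ (x:ℤ)^2 := dvd_pow hpx (by norm_num)
            have := dvd_sub hpk1 hpx2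
            simpa using this
          have : (p:ℕ) ∣ 1 := by exact_mod_cast hp1
          simp at this; omega
        rcases em ((p:ℤ) ∣ ((x:ℤ) - y)) with h | h
        · -- then p ∤ x+y, so p^k ∣ x - y, so x = y
          have hnb : ¬ (p:ℤ) ∣ ((x:ℤ) + y) := fun hb => hnotboth ⟨h, hb⟩
          have hfull : (p:ℤ)^k ∣ ((x:ℤ) - y) := hpz.pow_dvd_of_dvd_mul_right k hnb hdvd
          have hz : (x:ℤ) - y = 0 := by
            refine Int.eq_zero_of_abs_lt_dvd hfull ?_
            rw [abs_lt]
            constructor <;> [linarith; linarith]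
          have hxy : x = y := by omega
          simp [hxy]
        · have hfull : (p:ℤ)^k ∣ ((x:ℤ) + y) := hpz.pow_dvd_of_dvd_mul_left k h hdvd
          obtain ⟨c, hc⟩ := hfull
          have hlb : (0:ℤ) ≤ (x:ℤ) + y := by positivity
          have hub : (x:ℤ) + y < 2 * (p:ℤ)^k := by linarith
          have hppos : (0:ℤ) < (p:ℤ)^k := by positivity
          have hc01 : c = 0 ∨ c = 1 := by
            rcases lt_trichotomy c 0 with h' | h' | h'
            · exfalso; nlinarith
            · left; exact h'
            · rcases eq_or_lt_of_le (show (1:ℤ) ≤ c from h') with h'' | h''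
              · right; omega
              · exfalso
                have : (2:ℤ) ≤ c := h''
                nlinarith
          rcases hc01 with rfl | rfl
          · -- x + y = 0 so x = 0, contradiction
            exfalso
            simp at hc
            have hx0 : x = 0 := by omega
            rw [hx0] at hxd
            norm_num at hxd
            have : p ≤ p^k := Nat.le_self_pow hk.ne' p
            omega
          · have hxeq : x = p^k - y := by
              have he : (x:ℤ) = (p:ℤ)^k - y := by linarith [hc]
              have hpky : ((p^k - y : ℕ) : ℤ) = (p:ℤ)^k - y := by
                push_cast [Nat.cast_sub (le_of_lt hylt)]; ring
              rw [← hpky] at he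
              exact_mod_cast he
            simp [hxeq]
      calc (Sroots (p^k)).card ≤ ({y, p^k - y} : Finset ℕ).card := Finset.card_le_card hsub
      _ ≤ 2 := (Finset.card_insert_le _ _).trans (by simp)

lemma sroots_card_mul {u v : ℕ} (hu : 0 < u) (hv : 0 < v) (huv : Nat.Coprime u v) :
    (Sroots (u*v)).card ≤ (Sroots u).card * (Sroots v).card := by
  rw [← Finset.card_product]
  apply Finset.card_le_card_of_injOn (fun x => (x % u, x % v))
  · intro x hx
    simp only [Sroots, Finset.mem_coe, Finset.mem_filter, Finset.mem_range] at hx ⊢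
    obtain ⟨hxlt, hxd⟩ := hx
    have hdu : u ∣ x^2 + 1 := dvd_trans (Dvd.intro v rfl) hxd
    have hdv : v ∣ x^2 + 1 := dvd_trans (Dvd.intro_left u rfl) hxd
    refine Finset.mem_product.2 ⟨Finset.mem_filter.2 ⟨Finset.mem_range.2 (Nat.mod_lt _ hu), ?_⟩,
      Finset.mem_filter.2 ⟨Finset.mem_range.2 (Nat.mod_lt _ hv), ?_⟩⟩
    · have h : (x % u)^2 + 1 ≡ x^2 + 1 [MOD u] := Nat.ModEq.add_right 1 ((Nat.mod_modEq x u).pow 2)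
      exact (Nat.modEq_zero_iff_dvd).1 ((h.trans ((Nat.modEq_zero_iff_dvd).2 hdu)))
    · have h : (x % v)^2 + 1 ≡ x^2 + 1 [MOD v] := Nat.ModEq.add_right 1 ((Nat.mod_modEq x v).pow 2)
      exact (Nat.modEq_zero_iff_dvd).1 ((h.trans ((Nat.modEq_zero_iff_dvd).2 hdv)))
  · intro x hx y hy hxy
    simp only [Sroots, Finset.coe_filter, Set.mem_setOf_eq, Finset.mem_range] at hx hy
    simp only [Prod.mk.injEq] at hxy
    have h1 : x ≡ y [MOD u] := by
      unfold Nat.ModEq; omega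
    have h2 : x ≡ y [MOD v] := by
      unfold Nat.ModEq; omega
    have h := (Nat.modEq_and_modEq_iff_modEq_mul huv).1 ⟨h1, h2⟩
    have := h.eq_of_lt_of_lt hx.1 hy.1
    exact this

lemma sroots_card_le_pow_omega : ∀ m : ℕ, (Sroots m).card ≤ 2 ^ m.primeFactors.card := by
  intro m
  induction m using Nat.recOnPosPrimePosCoprime with
  | prime_pow p k hp hk =>
    calc (Sroots (p^k)).card ≤ 2 := sroots_card_prime_pow hp hk
    _ ≤ 2 ^ (p^k).primeFactors.card := by
        rw [Nat.primeFactors_prime_pow hk.ne' hp]; simp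
  | zero => simp [Sroots]
  | one =>
    have : (Sroots 1).card ≤ 1 := by
      apply Finset.card_le_card (Finset.filter_subset _ _) |>.trans
      simp
    simpa using this
  | coprime a b ha hb hab iha ihb =>
    calc (Sroots (a*b)).card ≤ (Sroots a).card * (Sroots b).card :=
          sroots_card_mul (by omega) (by omega) hab
    _ ≤ 2 ^ a.primeFactors.card * 2 ^ b.primeFactors.card := Nat.mul_le_mul iha ihb
    _ = 2 ^ (a.primeFactors.card + b.primeFactors.card) := (pow_add 2 _ _).symm
    _ = 2 ^ (a*b).primeFactors.card := by
        rw [hab.primeFactors_mul, Finset.card_union_of_disjoint hab.disjoint_primeFactors]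

lemma pow_omega_le (m : ℕ) (hm : 1 ≤ m) :
    (2:ℝ) ^ m.primeFactors.card ≤ 65536 * (m:ℝ) ^ ((1:ℝ)/4) := by
  classical
  set S := m.primeFactors.filter (fun p => p < 16) with hS
  set L := m.primeFactors.filter (fun p => ¬ p < 16) with hL
  have hcardsplit : m.primeFactors.card = S.card + L.card := by
    rw [hS, hL]; exact (Finset.card_filter_add_card_filter_not _).symm
  have hScard : S.card ≤ 16 := by
    have : S ⊆ Finset.range 16 := by
      intro p hp
      simp only [hS, Finset.mem_filter] at hp
      exact Finset.mem_range.2 hp.2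
    simpa using Finset.card_le_card this
  have hLbound : (2:ℝ) ^ L.card ≤ (m:ℝ) ^ ((1:ℝ)/4) := by
    have h16 : ((16:ℝ)) ^ L.card ≤ ((L.prod id : ℕ) : ℝ) := by
      push_cast
      rw [← Finset.prod_const]
      apply Finset.prod_le_prod
      · intro i _; norm_num
      · intro i hi
        simp only [hL, Finset.mem_filter, not_lt] at hi
        exact_mod_cast hi.2
    have hprodm : (L.prod id : ℕ) ≤ m := by
      apply Nat.le_of_dvd hm
      refine dvd_trans (Finset.prod_dvd_prod_of_subset _ _ _ (Finset.filter_subset _ _)) ?_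
      simpa using Nat.prod_primeFactors_dvd m
    have h2 : ((2:ℝ) ^ L.card) ^ (4:ℕ) ≤ ((m:ℝ) ^ ((1:ℝ)/4)) ^ (4:ℕ) := by
      have hr : ((m:ℝ) ^ ((1:ℝ)/4)) ^ (4:ℕ) = (m:ℝ) := by
        rw [← Real.rpow_natCast ((m:ℝ) ^ ((1:ℝ)/4)) 4, ← Real.rpow_mul (by positivity)]
        norm_num
      rw [hr]
      calc ((2:ℝ) ^ L.card) ^ (4:ℕ) = (16:ℝ) ^ L.card := by
            rw [← pow_mul, mul_comm, pow_mul]; norm_num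
      _ ≤ ((L.prod id : ℕ) : ℝ) := h16
      _ ≤ (m:ℝ) := by exact_mod_cast hprodm
    have h4 : (0:ℝ) ≤ (m:ℝ) ^ ((1:ℝ)/4) := by positivity
    exact le_of_pow_le_pow_left₀ (by norm_num) h4 h2
  calc (2:ℝ) ^ m.primeFactors.card = 2 ^ S.card * 2 ^ L.card := by
        rw [hcardsplit, pow_add]
  _ ≤ 2 ^ (16:ℕ) * (m:ℝ) ^ ((1:ℝ)/4) := by
      apply mul_le_mul _ hLbound (by positivity) (by positivity)
      exact pow_le_pow_right₀ (by norm_num) hScard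
  _ = 65536 * (m:ℝ) ^ ((1:ℝ)/4) := by norm_num

/-- ordered pairs of primes (q,r) with q^2+r^2 = m, coordinates < n+1 -/
def Pairs (n m : ℕ) : Finset (ℕ × ℕ) :=
  ((Finset.range (n+1)) ×ˢ (Finset.range (n+1))).filter
    (fun s => s.1.Prime ∧ s.2.Prime ∧ s.1^2 + s.2^2 = m)

lemma pairs_card_le (n m : ℕ) : (Pairs n m).card ≤ 1 + (Sroots m).card := by
  classical
  rcases Nat.eq_zero_or_pos m with rfl | hm
  · have : Pairs n 0 = ∅ := by
      ext s
      simp only [Pairs, Finset.mem_filter, Finset.notMem_empty, iff_false, not_and]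
      intro _ hq hr
      have := hq.two_le
      have := hr.two_le
      intro h
      nlinarith
    simp [this]
  haveI : NeZero m := ⟨hm.ne'⟩
  have hsplit : Pairs n m =
      (Pairs n m).filter (fun s => s.1 = s.2) ∪ (Pairs n m).filter (fun s => ¬ s.1 = s.2) :=
    (Finset.filter_union_filter_not_eq _ _).symm
  rw [hsplit]
  apply Finset.card_union_le _ _ |>.trans
  gcongr
  · -- diagonal: at most one element
    apply Finset.card_le_one.2
    intro s hs t ht
    simp only [Pairs, Finset.mem_filter] at hs ht
    obtain ⟨⟨-, -, -, hsum⟩, hdiag⟩ := hs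
    obtain ⟨⟨-, -, -, hsum'⟩, hdiag'⟩ := ht
    have h1 : s.1 = t.1 := by
      rw [hdiag] at hsum
      rw [hdiag'] at hsum'
      have : s.2 ^ 2 = t.2 ^ 2 := by omega
      have := Nat.pow_left_injective (by norm_num) this
      rw [hdiag, hdiag', this]
    have h2 : s.2 = t.2 := by rw [← hdiag, ← hdiag', h1]
    exact Prod.ext h1 h2
  · -- off-diagonal: inject into Sroots m
    apply Finset.card_le_card_of_injOn
      (fun s => ((s.1 : ZMod m) * (s.2 : ZMod m)⁻¹).val)
    · intro s hs
      simp only [Pairs, Finset.mem_coe, Finset.mem_filter] at hs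
      obtain ⟨⟨-, hq, hr, hsum⟩, hne⟩ := hs
      have hrd : ¬ (s.2 ∣ m) := by
        intro hd
        have h1 : s.2 ∣ s.1^2 := by
          have : s.2 ∣ s.2^2 := dvd_pow_self _ (by norm_num)
          have h2 := Nat.dvd_sub hd this
          rwa [← hsum, Nat.add_sub_cancel] at h2
        have := (Nat.Prime.dvd_of_dvd_pow hr h1)
        have := (Nat.prime_dvd_prime_iff_eq hr hq).1 this
        exact hne this.symm
      have hcop : Nat.Coprime s.2 m := (Nat.Prime.coprime_iff_not_dvd hr).2 hrd
      have hunit : IsUnit ((s.2 : ZMod m)) := (ZMod.isUnit_iff_coprime _ _).2 hcop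
      set u : ZMod m := (s.1 : ZMod m) * (s.2 : ZMod m)⁻¹ with hu
      have hu2 : u^2 + 1 = 0 := by
        have hmz : ((m:ℕ) : ZMod m) = 0 := ZMod.natCast_self m
        have hsum' : ((s.1:ZMod m))^2 + ((s.2:ZMod m))^2 = 0 := by
          have : (((s.1^2 + s.2^2 : ℕ)) : ZMod m) = 0 := by rw [hsum]; exact ZMod.natCast_self m
          push_cast at this
          exact this
        have hinv : (s.2 : ZMod m) * (s.2 : ZMod m)⁻¹ = 1 := ZMod.mul_inv_of_unit _ hunit
        have : u^2 * ((s.2:ZMod m))^2 = ((s.1:ZMod m))^2 := by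
          rw [hu]
          ring_nf
          calc (s.1:ZMod m)^2 * ((s.2:ZMod m)⁻¹)^2 * ((s.2:ZMod m))^2
              = (s.1:ZMod m)^2 * (((s.2:ZMod m)) * (s.2:ZMod m)⁻¹)^2 := by ring
          _ = ((s.1:ZMod m))^2 := by rw [hinv]; ring
        have h4 : u^2 * ((s.2:ZMod m))^2 + ((s.2:ZMod m))^2 = 0 := by rw [this]; exact hsum'
        have h5 : (u^2 + 1) * ((s.2:ZMod m))^2 = 0 := by ring_nf; ring_nf at h4; exact h4
        have hunit2 : IsUnit (((s.2:ZMod m))^2) := hunit.pow 2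
        have hw : ((s.2:ZMod m))^2 * (((s.2:ZMod m))^2)⁻¹ = 1 := ZMod.mul_inv_of_unit _ hunit2
        calc u^2 + 1 = (u^2+1) * (((s.2:ZMod m))^2 * (((s.2:ZMod m))^2)⁻¹) := by rw [hw]; ring
        _ = ((u^2+1) * ((s.2:ZMod m))^2) * (((s.2:ZMod m))^2)⁻¹ := by ring
        _ = 0 := by rw [h5, zero_mul]
      simp only [Sroots, Finset.mem_coe, Finset.mem_filter, Finset.mem_range]
      constructor
      · exact ZMod.val_lt _
      · have hcast : ((u.val^2 + 1 : ℕ) : ZMod m) = 0 := by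
          push_cast
          rw [ZMod.natCast_val, ZMod.cast_id]
          exact hu2
        exact (ZMod.natCast_eq_zero_iff _ _).1 hcast
    · intro s hs t ht hst
      simp only [Finset.coe_filter, Set.mem_setOf_eq, Pairs, Finset.mem_filter,
        Finset.mem_product, Finset.mem_range] at hs ht
      obtain ⟨⟨-, hq, hr, hsum⟩, hne⟩ := hs
      obtain ⟨⟨-, hq', hr', hsum'⟩, hne'⟩ := ht
      -- units
      have hrd : ∀ a b : ℕ, a.Prime → b.Prime → a ≠ b → a^2 + b^2 = m → ¬ (b ∣ m) := by
        intro a b ha hb hab habm hd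
        have h1 : b ∣ a^2 := by
          have h2 : b ∣ b^2 := dvd_pow_self _ (by norm_num)
          have h3 := Nat.dvd_sub hd h2
          rwa [← habm, Nat.add_sub_cancel] at h3
        have h4 := Nat.Prime.dvd_of_dvd_pow hb h1
        exact hab ((Nat.prime_dvd_prime_iff_eq hb ha).1 h4).symm
      have hunit : IsUnit ((s.2 : ZMod m)) :=
        (ZMod.isUnit_iff_coprime _ _).2
          ((Nat.Prime.coprime_iff_not_dvd hr).2 (hrd _ _ hq hr hne hsum))
      have hunit' : IsUnit ((t.2 : ZMod m)) :=
        (ZMod.isUnit_iff_coprime _ _).2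
          ((Nat.Prime.coprime_iff_not_dvd hr').2 (hrd _ _ hq' hr' hne' hsum'))
      have hinv : (s.2 : ZMod m) * (s.2 : ZMod m)⁻¹ = 1 := ZMod.mul_inv_of_unit _ hunit
      have hinv' : (t.2 : ZMod m) * (t.2 : ZMod m)⁻¹ = 1 := ZMod.mul_inv_of_unit _ hunit'
      have huu : (s.1 : ZMod m) * (s.2 : ZMod m)⁻¹ = (t.1 : ZMod m) * (t.2 : ZMod m)⁻¹ := by
        have := congrArg (fun x : ℕ => (x : ZMod m)) hst
        simpa only [ZMod.natCast_val, ZMod.cast_id] using this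
      have hcross : (s.1 : ZMod m) * t.2 = (t.1 : ZMod m) * s.2 := by
        have e1 : (s.1:ZMod m) * (s.2:ZMod m)⁻¹ * ((s.2:ZMod m) * t.2)
            = (s.1:ZMod m) * t.2 * ((s.2:ZMod m) * (s.2:ZMod m)⁻¹) := by ring
        have e2 : (t.1:ZMod m) * (t.2:ZMod m)⁻¹ * ((s.2:ZMod m) * t.2)
            = (t.1:ZMod m) * s.2 * ((t.2:ZMod m) * (t.2:ZMod m)⁻¹) := by ring
        calc (s.1:ZMod m) * t.2 = (s.1:ZMod m) * t.2 * ((s.2:ZMod m) * (s.2:ZMod m)⁻¹) := by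
              rw [hinv, mul_one]
        _ = (s.1:ZMod m) * (s.2:ZMod m)⁻¹ * ((s.2:ZMod m) * t.2) := e1.symm
        _ = (t.1:ZMod m) * (t.2:ZMod m)⁻¹ * ((s.2:ZMod m) * t.2) := by rw [huu]
        _ = (t.1:ZMod m) * s.2 * ((t.2:ZMod m) * (t.2:ZMod m)⁻¹) := e2
        _ = (t.1:ZMod m) * s.2 := by rw [hinv', mul_one]
      have hmod : s.1 * t.2 ≡ t.1 * s.2 [MOD m] := by
        rw [← ZMod.natCast_eq_natCast_iff]
        push_cast
        exact hcross
      have hb1 : s.1 * t.2 < m := by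
        have h2s : 2 ≤ s.2 := hr.two_le
        have h2t : 2 ≤ t.1 := hq'.two_le
        have hsq : (s.1 * t.2)^2 < m^2 := by nlinarith
        by_contra hcon
        push_neg at hcon
        exact absurd (Nat.pow_le_pow_left hcon 2) (by omega)
      have hb2 : t.1 * s.2 < m := by
        have h2s : 2 ≤ t.2 := hr'.two_le
        have h2t : 2 ≤ s.1 := hq.two_le
        have hsq : (t.1 * s.2)^2 < m^2 := by nlinarith
        by_contra hcon
        push_neg at hcon
        exact absurd (Nat.pow_le_pow_left hcon 2) (by omega)
      have heqn : s.1 * t.2 = t.1 * s.2 := hmod.eq_of_lt_of_lt hb1 hb2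
      have h11 : s.1 = t.1 := by
        have hdvd : s.1 ∣ t.1 * s.2 := ⟨t.2, heqn.symm⟩
        rcases (Nat.Prime.dvd_mul hq).1 hdvd with h | h
        · exact (Nat.prime_dvd_prime_iff_eq hq hq').1 h
        · exact absurd ((Nat.prime_dvd_prime_iff_eq hq hr).1 h) hne
      have h22 : s.2 = t.2 := by
        rw [h11] at heqn
        have := Nat.eq_of_mul_eq_mul_left (hq'.pos) heqn
        omega
      exact Prod.ext h11 h22

lemma one_le_rpow {X : ℕ} (hX : 1 ≤ X) (e : ℝ) (he : 0 ≤ e) : (1:ℝ) ≤ (X:ℝ) ^ e := by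
  apply Real.one_le_rpow (by exact_mod_cast hX) he

lemma pairs_card_real {n : ℕ} (hn : 1 ≤ n) {m : ℕ} (hm : m ≤ n) :
    ((Pairs n m).card : ℝ) ≤ 65537 * (n:ℝ) ^ ((1:ℝ)/4) := by
  have hone : (1:ℝ) ≤ (n:ℝ) ^ ((1:ℝ)/4) := one_le_rpow hn _ (by norm_num)
  rcases Nat.eq_zero_or_pos m with rfl | hm1
  · have h0 : (Sroots 0).card = 0 := by simp [Sroots]
    have := pairs_card_le n 0
    rw [h0] at this
    have : ((Pairs n 0).card : ℝ) ≤ 1 := by exact_mod_cast this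
    nlinarith
  · have h1 := pairs_card_le n m
    have h2 := sroots_card_le_pow_omega m
    have h3 := pow_omega_le m hm1
    have h4 : ((Pairs n m).card : ℝ) ≤ 1 + 65536 * (m:ℝ) ^ ((1:ℝ)/4) := by
      have c1 : ((Pairs n m).card : ℝ) ≤ 1 + ((Sroots m).card : ℝ) := by exact_mod_cast h1
      have c2 : ((Sroots m).card : ℝ) ≤ (2:ℝ) ^ m.primeFactors.card := by exact_mod_cast h2
      linarith
    have h5 : (m:ℝ) ^ ((1:ℝ)/4) ≤ (n:ℝ) ^ ((1:ℝ)/4) :=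
      Real.rpow_le_rpow (by positivity) (by exact_mod_cast hm) (by norm_num)
    nlinarith

/-- proper prime powers up to X -/
def PPP (X : ℕ) : Finset ℕ :=
  (Finset.range (X+1)).filter (fun b => IsPrimePow b ∧ ¬ b.Prime)

set_option maxHeartbeats 2000000 in
lemma card_ppp {X : ℕ} (hX : 1 ≤ X) : ((PPP X).card : ℝ) ≤ 50 * (X:ℝ) ^ ((1:ℝ)/2) := by
  classical
  set Sq := (Finset.range (X+1)).filter (fun b => ∃ d, b = d^2) with hSq
  set Od := (Finset.range (X+1)).filter (fun b => ∃ p k, p.Prime ∧ 3 ≤ k ∧ b = p^k) with hOd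
  have hcover : PPP X ⊆ Sq ∪ Od := by
    intro b hb
    simp only [PPP, Finset.mem_filter, Finset.mem_range] at hb
    obtain ⟨hblt, hpp, hnp⟩ := hb
    obtain ⟨p, k, hp, hk, rfl⟩ := hpp
    have hp' : p.Prime := hp.nat_prime
    have hk2 : 2 ≤ k := by
      by_contra h
      push_neg at h
      interval_cases k
      simp only [pow_one] at hnp
      exact hnp hp'
    rcases Nat.even_or_odd k with he | ho
    · apply Finset.mem_union_left
      simp only [hSq, Finset.mem_filter, Finset.mem_range]
      obtain ⟨j, hj⟩ := he
      exact ⟨hblt, ⟨p^j, by rw [hj]; ring⟩⟩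
    · apply Finset.mem_union_right
      simp only [hOd, Finset.mem_filter, Finset.mem_range]
      exact ⟨hblt, ⟨p, k, hp', by obtain ⟨j, hj⟩ := ho; omega, rfl⟩⟩
  set F := Nat.floor ((X:ℝ) ^ ((1:ℝ)/3)) with hF
  set K := Nat.log 2 X with hK
  have hSqcard : Sq.card ≤ Nat.sqrt X + 1 := by
    have h := Finset.card_le_card_of_injOn (fun b => Nat.sqrt b)
      (s := Sq) (t := Finset.range (Nat.sqrt X + 1)) ?_ ?_
    · simpa using h
    · intro b hb
      simp only [hSq, Finset.mem_coe, Finset.mem_filter, Finset.mem_range] at hb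
      obtain ⟨hble, d, rfl⟩ := hb
      rw [Finset.mem_coe, Finset.mem_range, Nat.lt_succ_iff]
      show Nat.sqrt (d^2) ≤ Nat.sqrt X
      rw [Nat.sqrt_eq', Nat.le_sqrt]
      nlinarith
    · intro b hb b' hb' hss
      simp only [hSq, Finset.coe_filter, Set.mem_setOf_eq, Finset.mem_range] at hb hb'
      obtain ⟨-, d, rfl⟩ := hb
      obtain ⟨-, d', rfl⟩ := hb'
      simp only [Nat.sqrt_eq'] at hss
      rw [hss]
  have hOdcard : Od.card ≤ (F+1) * (K+1) := by
    have h := Finset.card_le_card_of_injOn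
      (fun b => (b.minFac, b.factorization b.minFac))
      (s := Od) (t := (Finset.range (F+1)) ×ˢ (Finset.range (K+1))) ?_ ?_
    · simpa [Finset.card_product] using h
    · intro b hb
      simp only [hOd, Finset.mem_coe, Finset.mem_filter, Finset.mem_range] at hb
      obtain ⟨hble, p, k, hp, hk3, rfl⟩ := hb
      have hmf : (p^k).minFac = p := Nat.Prime.pow_minFac hp (by omega)
      have hfac : (p^k).factorization p = k := by
        rw [hp.factorization_pow]; simp
      show ((p^k).minFac, (p^k).factorization (p^k).minFac) ∈ _
      rw [hmf, Finset.mem_coe, Finset.mem_product, Finset.mem_range, Finset.mem_range, hfac]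
      constructor
      · rw [Nat.lt_succ_iff]
        apply Nat.le_floor
        have h3 : (p:ℝ)^(3:ℕ) ≤ (X:ℝ) := by
          have h31 : p^3 ≤ p^k := Nat.pow_le_pow_right hp.pos hk3
          have h32 : p^3 ≤ X := by omega
          exact_mod_cast h32
        calc (p:ℝ) = ((p:ℝ)^(3:ℕ)) ^ ((1:ℝ)/3) := by
              rw [← Real.rpow_natCast (p:ℝ) 3, ← Real.rpow_mul (by positivity)]
              norm_num
        _ ≤ (X:ℝ) ^ ((1:ℝ)/3) := Real.rpow_le_rpow (by positivity) h3 (by norm_num)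
      · rw [Nat.lt_succ_iff, hK]
        rw [Nat.le_log_iff_pow_le (by norm_num) (by omega)]
        calc 2^k ≤ p^k := Nat.pow_le_pow_left hp.two_le k
        _ ≤ X := by omega
    · intro b hb b' hb' hss
      simp only [hOd, Finset.coe_filter, Set.mem_setOf_eq, Finset.mem_range] at hb hb'
      obtain ⟨-, p, k, hp, hk3, rfl⟩ := hb
      obtain ⟨-, p', k', hp', hk3', rfl⟩ := hb'
      have hmf : (p^k).minFac = p := Nat.Prime.pow_minFac hp (by omega)
      have hmf' : (p'^k').minFac = p' := Nat.Prime.pow_minFac hp' (by omega)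
      have hfac : (p^k).factorization p = k := by rw [hp.factorization_pow]; simp
      have hfac' : (p'^k').factorization p' = k' := by rw [hp'.factorization_pow]; simp
      simp only [Prod.mk.injEq, hmf, hmf'] at hss
      obtain ⟨h1, h2⟩ := hss
      subst h1
      rw [hfac, hfac'] at h2
      rw [h2]
  -- assemble
  have hXpos : (0:ℝ) < X := by exact_mod_cast hX
  have hhalf : (1:ℝ) ≤ (X:ℝ) ^ ((1:ℝ)/2) := one_le_rpow hX _ (by norm_num)
  have hsqrt : ((Nat.sqrt X : ℕ) : ℝ) ≤ (X:ℝ) ^ ((1:ℝ)/2) := by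
    have h1 : (Nat.sqrt X)^2 ≤ X := Nat.sqrt_le' X
    have h2 : ((Nat.sqrt X : ℕ):ℝ)^(2:ℕ) ≤ (X:ℝ) := by exact_mod_cast h1
    calc ((Nat.sqrt X : ℕ):ℝ) = (((Nat.sqrt X : ℕ):ℝ)^(2:ℕ)) ^ ((1:ℝ)/2) := by
          rw [← Real.rpow_natCast (((Nat.sqrt X : ℕ)):ℝ) 2, ← Real.rpow_mul (by positivity)]
          norm_num
    _ ≤ (X:ℝ) ^ ((1:ℝ)/2) := Real.rpow_le_rpow (by positivity) h2 (by norm_num)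
  have hFb : (F:ℝ) ≤ (X:ℝ) ^ ((1:ℝ)/3) := Nat.floor_le (by positivity)
  have hKb : (K:ℝ) ≤ 2 * Real.log X := by
    have h1 : (2:ℕ)^K ≤ X := Nat.pow_log_le_self 2 (by omega)
    have h2 : ((2:ℝ))^(K:ℕ) ≤ (X:ℝ) := by exact_mod_cast h1
    have h3 : (K:ℝ) * Real.log 2 ≤ Real.log X := by
      rw [← Real.log_pow]
      exact Real.log_le_log (by positivity) h2
    have h4 : (0.6931471803:ℝ) < Real.log 2 := Real.log_two_gt_d9
    nlinarith [Nat.cast_nonneg (α := ℝ) K]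
  have hlogX : Real.log X ≤ 6 * (X:ℝ) ^ ((1:ℝ)/6) := by
    have h1 : Real.log ((X:ℝ) ^ ((1:ℝ)/6)) = (1/6) * Real.log X := Real.log_rpow hXpos _
    have h2 : Real.log ((X:ℝ) ^ ((1:ℝ)/6)) ≤ (X:ℝ) ^ ((1:ℝ)/6) - 1 :=
      Real.log_le_sub_one_of_pos (by positivity)
    nlinarith [Real.rpow_natCast (X:ℝ) 0]
  have h16 : (X:ℝ) ^ ((1:ℝ)/6) ≤ (X:ℝ) ^ ((1:ℝ)/2) :=
    Real.rpow_le_rpow_of_exponent_le (by exact_mod_cast hX) (by norm_num)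
  have h13 : (X:ℝ) ^ ((1:ℝ)/3) ≤ (X:ℝ) ^ ((1:ℝ)/2) :=
    Real.rpow_le_rpow_of_exponent_le (by exact_mod_cast hX) (by norm_num)
  have hprod : (X:ℝ) ^ ((1:ℝ)/3) * (X:ℝ) ^ ((1:ℝ)/6) = (X:ℝ) ^ ((1:ℝ)/2) := by
    rw [← Real.rpow_add hXpos]; norm_num
  have hcard : ((PPP X).card : ℝ) ≤ ((Nat.sqrt X : ℕ):ℝ) + 1 + ((F:ℝ)+1) * ((K:ℝ)+1) := by
    have h1 : (PPP X).card ≤ (Nat.sqrt X + 1) + (F+1)*(K+1) := by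
      calc (PPP X).card ≤ (Sq ∪ Od).card := Finset.card_le_card hcover
      _ ≤ Sq.card + Od.card := Finset.card_union_le _ _
      _ ≤ (Nat.sqrt X + 1) + (F+1)*(K+1) := by omega
    have := (Nat.cast_le (α := ℝ)).2 h1
    push_cast at this
    linarith
  have hK0 : (0:ℝ) ≤ (K:ℝ) := Nat.cast_nonneg K
  have hF0 : (0:ℝ) ≤ (F:ℝ) := Nat.cast_nonneg F
  have hlog0 : (0:ℝ) ≤ Real.log X := Real.log_natCast_nonneg X
  have hstep : ((F:ℝ)+1) * ((K:ℝ)+1) ≤ ((X:ℝ)^((1:ℝ)/3) + 1) * (12 * (X:ℝ)^((1:ℝ)/6) + 1) := by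
    apply mul_le_mul _ _ (by linarith) (by positivity)
    · linarith
    · nlinarith
  have hx6pos : (0:ℝ) ≤ (X:ℝ)^((1:ℝ)/6) := by positivity
  have hx3pos : (0:ℝ) ≤ (X:ℝ)^((1:ℝ)/3) := by positivity
  have hexp : ((X:ℝ)^((1:ℝ)/3) + 1) * (12 * (X:ℝ)^((1:ℝ)/6) + 1) ≤ 26 * (X:ℝ)^((1:ℝ)/2) := by
    have h6 : (X:ℝ)^((1:ℝ)/6) ≤ (X:ℝ)^((1:ℝ)/2) := h16
    have h3 : (X:ℝ)^((1:ℝ)/3) ≤ (X:ℝ)^((1:ℝ)/2) := h13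
    nlinarith [hprod]
  calc ((PPP X).card : ℝ) ≤ ((Nat.sqrt X : ℕ):ℝ) + 1 + ((F:ℝ)+1) * ((K:ℝ)+1) := hcard
  _ ≤ (X:ℝ)^((1:ℝ)/2) + (X:ℝ)^((1:ℝ)/2) + 26 * (X:ℝ)^((1:ℝ)/2) := by linarith
  _ ≤ 50 * (X:ℝ)^((1:ℝ)/2) := by nlinarith

lemma nat_sqrt_le_rpow (n : ℕ) : ((Nat.sqrt n : ℕ) : ℝ) ≤ (n:ℝ) ^ ((1:ℝ)/2) := by
  have h1 : (Nat.sqrt n)^2 ≤ n := Nat.sqrt_le' n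
  have h2 : ((Nat.sqrt n : ℕ):ℝ)^(2:ℕ) ≤ (n:ℝ) := by exact_mod_cast h1
  calc ((Nat.sqrt n : ℕ):ℝ) = (((Nat.sqrt n : ℕ):ℝ)^(2:ℕ)) ^ ((1:ℝ)/2) := by
        rw [← Real.rpow_natCast (((Nat.sqrt n : ℕ)):ℝ) 2, ← Real.rpow_mul (by positivity)]
        norm_num
  _ ≤ (n:ℝ) ^ ((1:ℝ)/2) := Real.rpow_le_rpow (by positivity) h2 (by norm_num)

lemma vonMangoldt_le_log_n {a n : ℕ} (h : a ≤ n) (hn : 1 ≤ n) :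
    ArithmeticFunction.vonMangoldt a ≤ Real.log n := by
  rcases Nat.eq_zero_or_pos a with rfl | ha
  · simp [Real.log_natCast_nonneg]
  · exact ArithmeticFunction.vonMangoldt_le_log.trans
      (Real.log_le_log (by exact_mod_cast ha) (by exact_mod_cast h))


/-- `r n = ∑_{p₁ + p₂² + p₃² = n} log p₁ log p₂ log p₃`, the sum running over ordered
triples of primes `(p₁, p₂, p₃)` with `p₁ + p₂² + p₃² = n`. -/
noncomputable def r (n : ℕ) : ℝ :=
  ∑ t ∈ ((Finset.range (n + 1)) ×ˢ (Finset.range (n + 1)) ×ˢ (Finset.range (n + 1))).filter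
      (fun t => t.1.Prime ∧ t.2.1.Prime ∧ t.2.2.Prime ∧ t.1 + t.2.1 ^ 2 + t.2.2 ^ 2 = n),
    Real.log t.1 * Real.log t.2.1 * Real.log t.2.2

/-- `R n = ∑_{a + b² + c² = n} Λ(a) Λ(b) Λ(c)`, the sum running over ordered triples of
positive integers `(a, b, c)` with `a + b² + c² = n`. -/
noncomputable def R (n : ℕ) : ℝ :=
  ∑ t ∈ ((Finset.range (n + 1)) ×ˢ (Finset.range (n + 1)) ×ˢ (Finset.range (n + 1))).filter
      (fun t => t.1 + t.2.1 ^ 2 + t.2.2 ^ 2 = n),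
    ArithmeticFunction.vonMangoldt t.1 * ArithmeticFunction.vonMangoldt t.2.1 *
      ArithmeticFunction.vonMangoldt t.2.2

set_option maxHeartbeats 2000000 in
theorem R_sub_r_bound :
    ∃ C > (0 : ℝ), ∀ n : ℕ, 2 ≤ n →
      |R n - r n| ≤ C * (n : ℝ) ^ ((3 : ℝ) / 4) * (Real.log n) ^ 3 := by
  classical
  refine ⟨4000000, by norm_num, ?_⟩
  intro n hn
  set Λ : ℕ → ℝ := fun a => ArithmeticFunction.vonMangoldt a with hΛ
  set f : ℕ × ℕ × ℕ → ℝ := fun t => Λ t.1 * Λ t.2.1 * Λ t.2.2 with hf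
  set big := (Finset.range (n + 1)) ×ˢ (Finset.range (n + 1)) ×ˢ (Finset.range (n + 1)) with hbig
  set T := big.filter (fun t => t.1 + t.2.1 ^ 2 + t.2.2 ^ 2 = n) with hT
  set P : ℕ × ℕ × ℕ → Prop := fun t => t.1.Prime ∧ t.2.1.Prime ∧ t.2.2.Prime with hP
  have hfnonneg : ∀ t, 0 ≤ f t := by
    intro t
    exact mul_nonneg (mul_nonneg ArithmeticFunction.vonMangoldt_nonneg
      ArithmeticFunction.vonMangoldt_nonneg) ArithmeticFunction.vonMangoldt_nonneg
  -- r n equals sum over T.filter P of f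
  have hr : r n = ∑ t ∈ T.filter P, f t := by
    rw [r]
    rw [hT, Finset.filter_filter]
    apply Finset.sum_congr
    · apply Finset.filter_congr
      intro t _
      constructor
      · rintro ⟨h1, h2, h3, h4⟩; exact ⟨h4, h1, h2, h3⟩
      · rintro ⟨h4, h1, h2, h3⟩; exact ⟨h1, h2, h3, h4⟩
    · intro t ht
      simp only [Finset.mem_filter] at ht
      obtain ⟨-, -, h1, h2, h3⟩ := ht
      rw [hf, hΛ]
      simp only
      rw [ArithmeticFunction.vonMangoldt_apply_prime h1,
        ArithmeticFunction.vonMangoldt_apply_prime h2,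
        ArithmeticFunction.vonMangoldt_apply_prime h3]
  have hR : R n = ∑ t ∈ T, f t := rfl
  have hsplit : R n - r n = ∑ t ∈ T.filter (fun t => ¬ P t), f t := by
    rw [hR, hr, ← Finset.sum_filter_add_sum_filter_not T P f]
    ring
  -- restrict to prime power triples
  set B := (T.filter (fun t => ¬ P t)).filter
      (fun t => IsPrimePow t.1 ∧ IsPrimePow t.2.1 ∧ IsPrimePow t.2.2) with hB
  have hrestrict : ∑ t ∈ T.filter (fun t => ¬ P t), f t = ∑ t ∈ B, f t := by
    rw [hB]
    refine (Finset.sum_filter_of_ne ?_).symm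
    intro t _ hft
    have h1 : Λ t.1 ≠ 0 := fun h => hft (by rw [hf]; simp only; rw [h]; ring)
    have h2 : Λ t.2.1 ≠ 0 := fun h => hft (by rw [hf]; simp only; rw [h]; ring)
    have h3 : Λ t.2.2 ≠ 0 := fun h => hft (by rw [hf]; simp only; rw [h]; ring)
    exact ⟨ArithmeticFunction.vonMangoldt_ne_zero_iff.1 h1,
      ArithmeticFunction.vonMangoldt_ne_zero_iff.1 h2,
      ArithmeticFunction.vonMangoldt_ne_zero_iff.1 h3⟩
  -- term bound
  have htermbound : ∀ t ∈ B, f t ≤ (Real.log n)^3 := by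
    intro t htB
    have htT : t ∈ T := Finset.mem_filter.1 (Finset.mem_filter.1 htB).1 |>.1
    have htbig : t ∈ big := Finset.mem_filter.1 htT |>.1
    rw [hbig] at htbig
    simp only [Finset.mem_product, Finset.mem_range] at htbig
    obtain ⟨ha, hb, hc⟩ := htbig
    have l1 : Λ t.1 ≤ Real.log n := vonMangoldt_le_log_n (by omega) (by omega)
    have l2 : Λ t.2.1 ≤ Real.log n := vonMangoldt_le_log_n (by omega) (by omega)
    have l3 : Λ t.2.2 ≤ Real.log n := vonMangoldt_le_log_n (by omega) (by omega)
    have hlog0 : 0 ≤ Real.log n := Real.log_natCast_nonneg n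
    have hn1 : 0 ≤ Λ t.1 := ArithmeticFunction.vonMangoldt_nonneg
    have hn2 : 0 ≤ Λ t.2.1 := ArithmeticFunction.vonMangoldt_nonneg
    have hn3 : 0 ≤ Λ t.2.2 := ArithmeticFunction.vonMangoldt_nonneg
    calc f t = Λ t.1 * Λ t.2.1 * Λ t.2.2 := rfl
    _ ≤ Real.log n * Real.log n * Real.log n := by
        apply mul_le_mul (mul_le_mul l1 l2 hn2 hlog0) l3 hn3 (by positivity)
    _ = (Real.log n)^3 := by ring
  -- covering
  set B1 := T.filter (fun t => (IsPrimePow t.1 ∧ ¬t.1.Prime) ∧ t.2.1.Prime ∧ t.2.2.Prime) with hB1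
  set B2 := T.filter (fun t => IsPrimePow t.2.1 ∧ ¬t.2.1.Prime) with hB2
  set B3 := T.filter (fun t => IsPrimePow t.2.2 ∧ ¬t.2.2.Prime) with hB3
  have hcover : B ⊆ B1 ∪ B2 ∪ B3 := by
    intro t ht
    rw [hB, Finset.mem_filter, Finset.mem_filter] at ht
    obtain ⟨⟨htT, hnp⟩, hpp1, hpp2, hpp3⟩ := ht
    rw [hP] at hnp
    by_cases hb : t.2.1.Prime
    · by_cases hc : t.2.2.Prime
      · have hna : ¬ t.1.Prime := fun hA => hnp ⟨hA, hb, hc⟩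
        exact Finset.mem_union_left _ (Finset.mem_union_left _
          (Finset.mem_filter.2 ⟨htT, ⟨hpp1, hna⟩, hb, hc⟩))
      · exact Finset.mem_union_right _ (Finset.mem_filter.2 ⟨htT, hpp3, hc⟩)
    · exact Finset.mem_union_left _ (Finset.mem_union_right _
        (Finset.mem_filter.2 ⟨htT, hpp2, hb⟩))
  -- bounds on the pieces
  have hsq1 : 1 ≤ Nat.sqrt n := by
    rw [Nat.le_sqrt]; omega
  have hn14 : (1:ℝ) ≤ (n:ℝ) ^ ((1:ℝ)/4) := one_le_rpow (by omega) _ (by norm_num)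
  have hn12 : (1:ℝ) ≤ (n:ℝ) ^ ((1:ℝ)/2) := one_le_rpow (by omega) _ (by norm_num)
  have hsqrt14 : ((Nat.sqrt n : ℕ) : ℝ) ^ ((1:ℝ)/2) ≤ (n:ℝ) ^ ((1:ℝ)/4) := by
    calc ((Nat.sqrt n : ℕ) : ℝ) ^ ((1:ℝ)/2) ≤ ((n:ℝ) ^ ((1:ℝ)/2)) ^ ((1:ℝ)/2) :=
          Real.rpow_le_rpow (by positivity) (nat_sqrt_le_rpow n) (by norm_num)
    _ = (n:ℝ) ^ ((1:ℝ)/4) := by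
        rw [← Real.rpow_mul (by positivity)]; norm_num
  have hrpowadd : (n:ℝ) ^ ((1:ℝ)/4) * (n:ℝ) ^ ((1:ℝ)/2) = (n:ℝ) ^ ((3:ℝ)/4) := by
    rw [← Real.rpow_add (by positivity : (0:ℝ) < n)]; norm_num
  -- B2 bound
  have hB2card : ∀ (proj : ℕ × ℕ × ℕ → ℕ × ℕ) (Bi : Finset (ℕ × ℕ × ℕ)),
      (∀ t ∈ Bi, t ∈ T) →
      (∀ t ∈ Bi, IsPrimePow (proj t).1 ∧ ¬(proj t).1.Prime) →
      (∀ t ∈ Bi, (proj t).1 ^ 2 + (proj t).2 ^ 2 = t.2.1 ^2 + t.2.2 ^2) →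
      (∀ t ∈ Bi, (proj t).2 ^ 2 ≤ n) →
      (∀ s t, s.1 = t.1 → ((proj s) = (proj t) → s.2 = t.2)) →
      (Bi.card : ℝ) ≤ 100 * (n:ℝ) ^ ((3:ℝ)/4) := by
    intro proj Bi hBiT hBipp hBisum hBile hproj
    have hinj : (Bi.card : ℕ) ≤ (PPP (Nat.sqrt n) ×ˢ Finset.range (Nat.sqrt n + 1)).card := by
      apply Finset.card_le_card_of_injOn proj
      · intro t ht
        have htT := hBiT t ht
        rw [hT, Finset.mem_filter] at htT
        obtain ⟨-, hsum⟩ := htT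
        have hb2 : (proj t).1 ^2 ≤ n := by
          have := hBisum t ht
          nlinarith [sq_nonneg ((proj t).2)]
        have hc2 : (proj t).2 ^2 ≤ n := hBile t ht
        rw [Finset.mem_coe, Finset.mem_product, Finset.mem_range, Nat.lt_succ_iff]
        refine ⟨?_, ?_⟩
        · rw [PPP, Finset.mem_filter, Finset.mem_range, Nat.lt_succ_iff]
          refine ⟨?_, hBipp t ht⟩
          rw [Nat.le_sqrt]
          nlinarith
        · rw [Nat.le_sqrt]
          nlinarith
      · intro s hs t ht hst
        have hsT := hBiT s (by simpa using hs)
        have htT := hBiT t (by simpa using ht)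
        rw [hT, Finset.mem_filter] at hsT htT
        have hsum1 := hBisum s (by simpa using hs)
        have hsum2 := hBisum t (by simpa using ht)
        have h1 : s.1 = t.1 := by
          have e1 := hsT.2
          have e2 := htT.2
          have e3 : (proj s).1 = (proj t).1 := by rw [hst]
          have e4 : (proj s).2 = (proj t).2 := by rw [hst]
          nlinarith [e1, e2, hsum1, hsum2]
        have h2 := hproj s t h1 hst
        exact Prod.ext h1 h2
    have hreal : (Bi.card : ℝ) ≤ ((PPP (Nat.sqrt n)).card : ℝ) * ((Nat.sqrt n : ℕ) + 1 : ℝ) := by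
      have := (Nat.cast_le (α := ℝ)).2 hinj
      rw [Finset.card_product, Finset.card_range] at this
      push_cast at this
      push_cast
      linarith
    calc (Bi.card : ℝ) ≤ ((PPP (Nat.sqrt n)).card : ℝ) * ((Nat.sqrt n : ℕ) + 1 : ℝ) := hreal
    _ ≤ (50 * ((Nat.sqrt n : ℕ):ℝ) ^ ((1:ℝ)/2)) * (2 * (n:ℝ) ^ ((1:ℝ)/2)) := by
        apply mul_le_mul (card_ppp hsq1)
        · have h := nat_sqrt_le_rpow n
          push_cast
          linarith
        · positivity
        · positivity
    _ ≤ (50 * (n:ℝ) ^ ((1:ℝ)/4)) * (2 * (n:ℝ) ^ ((1:ℝ)/2)) := by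
        apply mul_le_mul_of_nonneg_right _ (by positivity)
        nlinarith [hsqrt14]
    _ = 100 * ((n:ℝ) ^ ((1:ℝ)/4) * (n:ℝ) ^ ((1:ℝ)/2)) := by ring
    _ = 100 * (n:ℝ) ^ ((3:ℝ)/4) := by rw [hrpowadd]
  -- apply to B2
  have hB2bound : ((B2.card : ℕ) : ℝ) ≤ 100 * (n:ℝ) ^ ((3:ℝ)/4) := by
    apply hB2card (fun t => (t.2.1, t.2.2))
    · intro t ht; exact Finset.mem_filter.1 ht |>.1
    · intro t ht; exact Finset.mem_filter.1 ht |>.2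
    · intro t _; rfl
    · intro t ht
      have htT := Finset.mem_filter.1 ht |>.1
      rw [hT, Finset.mem_filter] at htT
      have := htT.2
      simp only at this ⊢
      omega
    · intro s t h1 h2
      simp only [Prod.mk.injEq] at h2
      exact Prod.ext h2.1 h2.2
  have hB3bound : ((B3.card : ℕ) : ℝ) ≤ 100 * (n:ℝ) ^ ((3:ℝ)/4) := by
    apply hB2card (fun t => (t.2.2, t.2.1))
    · intro t ht; exact Finset.mem_filter.1 ht |>.1
    · intro t ht; exact Finset.mem_filter.1 ht |>.2
    · intro t _; simp only; ring
    · intro t ht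
      have htT := Finset.mem_filter.1 ht |>.1
      rw [hT, Finset.mem_filter] at htT
      have := htT.2
      simp only at this ⊢
      omega
    · intro s t h1 h2
      simp only [Prod.mk.injEq] at h2
      exact Prod.ext h2.2 h2.1
  -- B1 bound
  have hB1sub : B1 ⊆ (PPP n).biUnion (fun a => {a} ×ˢ Pairs n (n - a)) := by
    intro t ht
    rw [hB1, Finset.mem_filter] at ht
    obtain ⟨htT, ⟨hppa, hnpa⟩, hpb, hpc⟩ := ht
    rw [hT, Finset.mem_filter] at htT
    obtain ⟨htbig, hsum⟩ := htT
    rw [hbig] at htbig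
    simp only [Finset.mem_product, Finset.mem_range] at htbig
    obtain ⟨ha, hb, hc⟩ := htbig
    rw [Finset.mem_biUnion]
    refine ⟨t.1, ?_, ?_⟩
    · rw [PPP, Finset.mem_filter, Finset.mem_range]
      exact ⟨ha, hppa, hnpa⟩
    · rw [Finset.mem_product]
      refine ⟨Finset.mem_singleton_self _, ?_⟩
      rw [Pairs, Finset.mem_filter, Finset.mem_product, Finset.mem_range, Finset.mem_range]
      exact ⟨⟨hb, hc⟩, hpb, hpc, by omega⟩
  have hB1bound : ((B1.card : ℕ) : ℝ) ≤ 3276850 * (n:ℝ) ^ ((3:ℝ)/4) := by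
    have h1 : B1.card ≤ ∑ a ∈ PPP n, ({a} ×ˢ Pairs n (n - a)).card :=
      (Finset.card_le_card hB1sub).trans (Finset.card_biUnion_le)
    have h2 : ∀ a, ({a} ×ˢ Pairs n (n - a)).card = (Pairs n (n - a)).card := by
      intro a; rw [Finset.card_product, Finset.card_singleton, one_mul]
    have h3 : ((B1.card : ℕ) : ℝ) ≤ ∑ a ∈ PPP n, ((Pairs n (n - a)).card : ℝ) := by
      have := (Nat.cast_le (α := ℝ)).2 h1
      push_cast at this
      simpa [h2] using this
    have h4 : ∑ a ∈ PPP n, ((Pairs n (n - a)).card : ℝ)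
        ≤ ((PPP n).card : ℝ) * (65537 * (n:ℝ) ^ ((1:ℝ)/4)) := by
      have h := Finset.sum_le_card_nsmul (PPP n) (fun a => ((Pairs n (n-a)).card : ℝ))
        (65537 * (n:ℝ) ^ ((1:ℝ)/4))
        (fun a _ => pairs_card_real (by omega) (Nat.sub_le n a))
      simpa [nsmul_eq_mul] using h
    have hn0 : (0:ℝ) < (n:ℝ) := by
      have : (0:ℕ) < n := by omega
      exact_mod_cast this
    have h6 : (n:ℝ)^((1:ℝ)/2) * (n:ℝ)^((1:ℝ)/4) = (n:ℝ)^((3:ℝ)/4) := by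
      rw [← Real.rpow_add hn0]; norm_num
    have h5 := card_ppp (X := n) (by omega)
    calc ((B1.card : ℕ) : ℝ) ≤ ((PPP n).card : ℝ) * (65537 * (n:ℝ) ^ ((1:ℝ)/4)) :=
          h3.trans h4
    _ ≤ (50 * (n:ℝ)^((1:ℝ)/2)) * (65537 * (n:ℝ) ^ ((1:ℝ)/4)) := by
        apply mul_le_mul_of_nonneg_right h5 (by positivity)
    _ = 3276850 * ((n:ℝ)^((1:ℝ)/2) * (n:ℝ)^((1:ℝ)/4)) := by ring
    _ = 3276850 * (n:ℝ) ^ ((3:ℝ)/4) := by rw [h6]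
  -- assemble
  have hBcard : ((B.card : ℕ) : ℝ) ≤ 4000000 * (n:ℝ)^((3:ℝ)/4) := by
    have h1 : B.card ≤ B1.card + B2.card + B3.card := by
      calc B.card ≤ ((B1 ∪ B2) ∪ B3).card := Finset.card_le_card hcover
      _ ≤ (B1 ∪ B2).card + B3.card := Finset.card_union_le _ _
      _ ≤ B1.card + B2.card + B3.card := by
          have := Finset.card_union_le B1 B2; omega
    have h2 : ((B.card : ℕ) : ℝ) ≤ ((B1.card : ℕ) : ℝ) + ((B2.card : ℕ) : ℝ) + ((B3.card : ℕ) : ℝ) := by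
      exact_mod_cast h1
    have hpos : (0:ℝ) ≤ (n:ℝ)^((3:ℝ)/4) := by positivity
    linarith
  have hsum_nonneg : 0 ≤ ∑ t ∈ B, f t := Finset.sum_nonneg (fun t _ => hfnonneg t)
  have habs : |R n - r n| = ∑ t ∈ B, f t := by
    rw [hsplit, hrestrict]
    exact abs_of_nonneg hsum_nonneg
  have hfinal : ∑ t ∈ B, f t ≤ ((B.card : ℕ) : ℝ) * (Real.log n)^3 := by
    have h := Finset.sum_le_card_nsmul B f ((Real.log n)^3) htermbound
    simpa [nsmul_eq_mul] using h
  rw [habs]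
  have hlog3 : 0 ≤ (Real.log n)^3 := pow_nonneg (Real.log_natCast_nonneg n) 3
  calc ∑ t ∈ B, f t ≤ ((B.card : ℕ) : ℝ) * (Real.log n)^3 := hfinal
  _ ≤ (4000000 * (n:ℝ)^((3:ℝ)/4)) * (Real.log n)^3 :=
      mul_le_mul_of_nonneg_right hBcard hlog3
  _ = 4000000 * (n:ℝ)^((3:ℝ)/4) * (Real.log n)^3 := by ring
end
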